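/- arXiv:0904.2375 — 7 statements merged into one kernel-verified Lean document; each statement's English description precedes it below -/
import Mathlib

section
/- Let X = X(F⁰, ℓ, T) be a PFT in standard form over a finite alphabet Σ, let n ≥ 1 be an integer, let d = gcd(n, T), and let X_d = X(F⁰, ℓ, d) be the PFT with the same forbidden set F⁰ and period d. Then |P_n(X)| = |P_n(X_d)| = Σ_{z ∈ Ω_d} (−1)^{dW_z/L_z − 1} · tr(A_z^n), where the matrices A_z are built from F⁰ for binary words z of length d, and dW_z/L_z equals the number of 1's in z. -/
open scoped BigOperators

/-- Words of length `ℓ` over the alphabet `A`. -/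
abbrev Word (A : Type) (ℓ : ℕ) := Fin ℓ → A

/-- The periodic-finite-type shift in standard form `X(F⁰, ℓ, T)`:
bi-infinite sequences `x` such that for some shift `r < T`, for every index `i ≡ 0 (mod T)`,
the length-`ℓ` word of `σ^r x` starting at `i` avoids `F0`. -/
def pftSF {A : Type} {ℓ : ℕ} (F0 : Set (Word A ℓ)) (T : ℕ) : Set (ℤ → A) :=
  {x | ∃ r : ℕ, r < T ∧
    ∀ i : ℤ, (T : ℤ) ∣ i → (fun k : Fin ℓ => x (i + (r : ℤ) + ((k : ℕ) : ℤ))) ∉ F0}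

/-- `P_n(X)`: the points of `X = X(F⁰, ℓ, T)` that are periodic with period `n`. -/
def pftPer {A : Type} {ℓ : ℕ} (F0 : Set (Word A ℓ)) (T n : ℕ) : Set (ℤ → A) :=
  {x | x ∈ pftSF F0 T ∧ ∀ i : ℤ, x (i + (n : ℤ)) = x i}

/-- The exponential of a formal power series (the standard formula, which agrees with
`exp` whenever the constant term of `S` is `0`). -/
noncomputable def psExp (S : PowerSeries ℚ) : PowerSeries ℚ :=
  PowerSeries.mk fun n =>
    ∑ k ∈ Finset.range (n + 1), PowerSeries.coeff n (S ^ k) / (Nat.factorial k : ℚ)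

/-- The zeta function `ζ_X(t) = exp (Σ_{n ≥ 1} |P_n(X)| tⁿ / n)` of the PFT `X(F⁰, ℓ, T)`. -/
noncomputable def pftZeta {A : Type} {ℓ : ℕ} (F0 : Set (Word A ℓ)) (T : ℕ) : PowerSeries ℚ :=
  psExp (PowerSeries.mk fun n =>
    if n = 0 then 0 else (Nat.card (pftPer F0 T n) : ℚ) / (n : ℚ))

/-- A word-based graph (WBG) with `T` phases, each phase a set of words of length `ℓ`. -/
structure WBG (A : Type) (ℓ T : ℕ) where
  V : Fin T → Set (Word A ℓ)

/-- Vertices of a WBG: pairs `(i, w)` with `w ∈ V^(i)`. -/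
abbrev WBG.Vertex {A : Type} {ℓ T : ℕ} (G : WBG A ℓ T) : Type :=
  {p : Fin T × Word A ℓ // p.2 ∈ G.V p.1}

/-- The labeled edge relation of a WBG: there is an edge labeled `a` from `u^(i)` to
`v^((i+1) mod T)` iff `u₂⋯u_ℓ = v₁⋯v_{ℓ-1}` and `v_ℓ = a`. -/
def WBG.Edge {A : Type} {ℓ T : ℕ} (G : WBG A ℓ T) (u v : G.Vertex) (a : A) : Prop :=
  ((v.1.1 : ℕ) = ((u.1.1 : ℕ) + 1) % T) ∧
  (∀ (k : ℕ) (h : k + 1 < ℓ), u.1.2 ⟨k + 1, h⟩ = v.1.2 ⟨k, by omega⟩) ∧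
  (∀ h : ℓ - 1 < ℓ, v.1.2 ⟨ℓ - 1, h⟩ = a)

/-- A path of length `n` (i.e. with `n` edges) in a WBG, together with its label sequence. -/
structure WBG.Path {A : Type} {ℓ T : ℕ} (G : WBG A ℓ T) (n : ℕ) where
  vtx : Fin (n + 1) → G.Vertex
  lbl : Fin n → A
  adj : ∀ k : Fin n, G.Edge (vtx k.castSucc) (vtx k.succ) (lbl k)

/-- The `n`-periodic bi-infinite repetition `(f 0 ⋯ f (n-1))^∞`. -/
def periodize {A : Type} {n : ℕ} (hn : 0 < n) (f : Fin n → A) : ℤ → A :=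
  fun j => f ⟨(j % (n : ℤ)).toNat, by
    have h1 : 0 ≤ j % (n : ℤ) := Int.emod_nonneg j (by exact_mod_cast hn.ne')
    have h2 : j % (n : ℤ) < (n : ℤ) := Int.emod_lt_of_pos j (by exact_mod_cast hn)
    omega⟩

/-- `C_n(w^(i))_G`: the set of `n`-periodic bi-infinite sequences generated by cycles
of length `n` at the vertex `w^(i)` of `G` (empty if `w ∉ V^(i)` or `n = 0`). -/
def WBG.CnSet {A : Type} {ℓ T : ℕ} (G : WBG A ℓ T) (i : Fin T) (w : Word A ℓ) (n : ℕ) :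
    Set (ℤ → A) :=
  {x | ∃ (p : G.Path n) (hn : 0 < n),
    (p.vtx 0).1 = (i, w) ∧ (p.vtx (Fin.last n)).1 = (i, w) ∧ x = periodize hn p.lbl}

noncomputable instance WBG.instFintypeVertex {A : Type} {ℓ T : ℕ} [Fintype A] (G : WBG A ℓ T) :
    Fintype G.Vertex := Fintype.ofFinite _

noncomputable instance WBG.instDecidableEqVertex {A : Type} {ℓ T : ℕ} (G : WBG A ℓ T) :
    DecidableEq G.Vertex := Classical.decEq _

open Classical in
/-- The (0–1) adjacency matrix of a WBG, with rational entries. -/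
noncomputable def WBG.adjMatrix {A : Type} {ℓ T : ℕ} [Fintype A] (G : WBG A ℓ T) :
    Matrix G.Vertex G.Vertex ℚ :=
  Matrix.of fun u v => if ∃ a : A, G.Edge u v a then 1 else 0

/-- The diagonal block of `(adjacency matrix)^T` indexed by the vertices in phase `i`. -/
noncomputable def WBG.phaseBlock {A : Type} {ℓ T : ℕ} [Fintype A] (G : WBG A ℓ T) (i : ℕ) :
    Matrix {v : G.Vertex // (v.1.1 : ℕ) = i} {v : G.Vertex // (v.1.1 : ℕ) = i} ℚ :=
  Matrix.of fun u v => (G.adjMatrix ^ T) u.1 v.1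

/-- The letter `z_m` of a binary word `z ∈ {0,1}^T`, read cyclically (indices mod `T`). -/
def zAt {T : ℕ} (z : Fin T → Bool) (m : ℕ) : Bool :=
  if h : m % T < T then z ⟨m % T, h⟩ else false

/-- `L_z`: the length of the primitive root `z^♯` of `z`, i.e. the least positive `L`
dividing `T` such that `z = (z^♯)^{T/L}` for the length-`L` prefix `z^♯` of `z`. -/
noncomputable def primLen {T : ℕ} (z : Fin T → Bool) : ℕ :=
  sInf {L : ℕ | 0 < L ∧ L ∣ T ∧ ∀ m : ℕ, zAt z (m + L) = zAt z m}

/-- `W_z`: the number of `1`s in the primitive root `z^♯` of `z`. -/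
noncomputable def primOnes {T : ℕ} (z : Fin T → Bool) : ℕ :=
  ((Finset.range (primLen z)).filter fun m => zAt z m = true).card

/-- `N_z = T / L_z`, so that `z = (z^♯)^{N_z}`. -/
noncomputable def primCopies {T : ℕ} (z : Fin T → Bool) : ℕ := T / primLen z

/-- The WBG `G_z` with `L_z` phases: phase `i` is `Σ^ℓ ∖ F⁰` if `z_i = 1`, else `Σ^ℓ`. -/
noncomputable def zGraph {A : Type} {ℓ : ℕ} (F0 : Set (Word A ℓ)) {T : ℕ} (z : Fin T → Bool) :
    WBG A ℓ (primLen z) :=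
  ⟨fun i => if zAt z (i : ℕ) then {w | w ∉ F0} else Set.univ⟩

/-- The MS presentation of the PFT `X(F⁰, ℓ, T)`: the WBG with `T` phases where
`V^(0) = Σ^ℓ ∖ F⁰` and `V^(i) = Σ^ℓ` for `i ≠ 0`. -/
def msGraph {A : Type} {ℓ : ℕ} (F0 : Set (Word A ℓ)) (T : ℕ) : WBG A ℓ T :=
  ⟨fun i => if (i : ℕ) = 0 then {w | w ∉ F0} else Set.univ⟩

/-- `Ω` is a set of conjugacy-class representatives of `{0,1}^T ∖ {0^T}` (under cyclic
shifts), each representative beginning with the symbol `1`. -/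
def IsRepSet {T : ℕ} (Ω : Finset (Fin T → Bool)) : Prop :=
  (∀ z ∈ Ω, zAt z 0 = true) ∧
  ∀ y : Fin T → Bool, (∃ i, y i = true) →
    ∃! z : Fin T → Bool, z ∈ Ω ∧ ∃ q : ℕ, ∀ m : ℕ, zAt z m = zAt y (m + q)

/-- `J(z,q) = {(q - i) mod T : 0 ≤ i ≤ T-1, z_i = 1}`, as a subset of `Fin T`. -/
def Jset {T : ℕ} (z : Fin T → Bool) (q : ℕ) : Set (Fin T) :=
  {j | ∃ i : Fin T, z i = true ∧ (j : ℕ) = (q + T - (i : ℕ)) % T}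

/-- A general PFT `X_{F̂,T}` given an ordered list `F̂^(0), …, F̂^(T-1)` of sets of
forbidden words (`Fh j` is read for `j ∈ {0, …, T-1}` via `j = i mod T`). -/
def pftGen {A : Type} (T : ℕ) (Fh : ℕ → Set (List A)) : Set (ℤ → A) :=
  {x | ∃ r : ℕ, r < T ∧ ∀ i : ℤ, ∀ f ∈ Fh ((i % (T : ℤ)).toNat),
    ¬ ∀ (k : ℕ) (hk : k < f.length), f.get ⟨k, hk⟩ = x (i + (r : ℤ) + (k : ℤ))}
namespace PFTproof

variable {A : Type}

lemma per_int {x : ℤ → A} {n : ℕ} (hx : ∀ i : ℤ, x (i + (n : ℤ)) = x i) :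
    ∀ (a j : ℤ), x (j + a * (n : ℤ)) = x j := by
  intro a
  induction a using Int.induction_on with
  | zero => simp
  | succ k ih =>
      intro j
      have h1 : j + ((k : ℤ) + 1) * (n : ℤ) = (j + k * n) + n := by ring
      rw [h1, hx, ih]
  | pred k ih =>
      intro j
      have h1 : j + (-(k : ℤ) - 1) * (n : ℤ) = ((j - n) + (-(k : ℤ)) * n) := by ring
      have h2 : j = (j - (n:ℤ)) + n := by ring
      rw [h1, ih]
      conv_rhs => rw [h2, hx]

lemma per_congr {x : ℤ → A} {n : ℕ} (hx : ∀ i : ℤ, x (i + (n : ℤ)) = x i)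
    {a b : ℤ} (h : (n : ℤ) ∣ a - b) : x a = x b := by
  obtain ⟨c, hc⟩ := h
  have : a = b + c * n := by linarith
  rw [this, per_int hx]

lemma periodize_per {n : ℕ} (hn : 0 < n) (f : Fin n → A) (i : ℤ) :
    periodize hn f (i + (n : ℤ)) = periodize hn f i := by
  unfold periodize
  congr 1
  apply Fin.ext
  have h := Int.add_mul_emod_self_left (a := i) (b := (n:ℤ)) (c := 1)
  simp only [mul_one] at h
  simp [h]

lemma periodize_coe {n : ℕ} (hn : 0 < n) (f : Fin n → A) (k : Fin n) :
    periodize hn f ((k : ℕ) : ℤ) = f k := by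
  unfold periodize
  congr 1
  apply Fin.ext
  have h1 : ((k : ℕ) : ℤ) % (n : ℤ) = ((k : ℕ) : ℤ) := by
    apply Int.emod_eq_of_lt (by positivity)
    exact_mod_cast k.isLt
  simp [h1]

lemma eq_periodize {n : ℕ} (hn : 0 < n) {x : ℤ → A} (hx : ∀ i : ℤ, x (i + (n : ℤ)) = x i)
    (j : ℤ) : periodize hn (fun k : Fin n => x ((k : ℕ) : ℤ)) j = x j := by
  show x (((j % (n : ℤ)).toNat : ℕ) : ℤ) = x j
  apply per_congr hx
  have h1 : 0 ≤ j % (n : ℤ) := Int.emod_nonneg _ (by exact_mod_cast hn.ne')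
  rw [Int.toNat_of_nonneg h1]
  exact ⟨-(j / n), by rw [Int.emod_def]; ring⟩

/-- The length-`ℓ` window of `x` starting at position `p`. -/
def win {ℓ : ℕ} (x : ℤ → A) (p : ℤ) : Word A ℓ := fun k => x (p + ((k : ℕ) : ℤ))

lemma win_congr {ℓ n : ℕ} {x : ℤ → A} (hx : ∀ i : ℤ, x (i + (n : ℤ)) = x i)
    {p q : ℤ} (h : (n : ℤ) ∣ p - q) : (win x p : Word A ℓ) = win x q := by
  funext k
  exact per_congr hx (by simpa using h)

lemma mem_pftSF_iff {ℓ T : ℕ} (F0 : Set (Word A ℓ)) (x : ℤ → A) :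
    x ∈ pftSF F0 T ↔ ∃ r : ℕ, r < T ∧ ∀ i : ℤ, (T : ℤ) ∣ i → win x (i + (r : ℤ)) ∉ F0 :=
  Iff.rfl

lemma pftPer_gcd {ℓ T n : ℕ} (hT : 1 ≤ T) (hn : 1 ≤ n) (F0 : Set (Word A ℓ)) :
    pftPer F0 T n = pftPer F0 (Nat.gcd n T) n := by
  have hd : 0 < Nat.gcd n T := Nat.gcd_pos_of_pos_left T hn
  ext x
  simp only [pftPer, Set.mem_setOf_eq, mem_pftSF_iff]
  constructor
  · rintro ⟨⟨r, hr, hF⟩, hper⟩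
    refine ⟨⟨r % Nat.gcd n T, Nat.mod_lt _ hd, ?_⟩, hper⟩
    intro i hi
    set d := Nat.gcd n T with hdef
    have hBez : (d : ℤ) = n * Nat.gcdA n T + T * Nat.gcdB n T := Nat.gcd_eq_gcd_ab n T
    set u := Nat.gcdA n T
    set v := Nat.gcdB n T
    have hdvd : (d : ℤ) ∣ (i + ((r % d : ℕ) : ℤ) - r) := by
      have h2 : (d:ℤ) ∣ ((r % d : ℕ) : ℤ) - r := by
        refine ⟨-((r / d : ℕ) : ℤ), ?_⟩
        have h4 : ((r % d : ℕ) : ℤ) + (d : ℤ) * ((r / d : ℕ) : ℤ) = (r : ℤ) := by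
          exact_mod_cast Nat.mod_add_div r d
        linarith
      have := dvd_add hi h2
      simpa [add_sub_assoc] using this
    obtain ⟨c, hc⟩ := hdvd
    have hwin : (win x (i + ((r % d : ℕ) : ℤ)) : Word A ℓ) = win x ((T : ℤ) * (v * c) + r) := by
      apply win_congr hper
      refine ⟨u * c, ?_⟩
      linear_combination hc + c * hBez
    rw [hwin]
    have h3 : (T : ℤ) ∣ (T : ℤ) * (v * c) := dvd_mul_right _ _
    have := hF ((T : ℤ) * (v * c)) h3
    simpa [add_assoc] using this
  · rintro ⟨⟨r, hr, hF⟩, hper⟩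
    refine ⟨⟨r, lt_of_lt_of_le hr (Nat.le_of_dvd hT (Nat.gcd_dvd_right n T)), ?_⟩, hper⟩
    intro i hi
    exact hF i (dvd_trans (Int.natCast_dvd_natCast.2 (Nat.gcd_dvd_right n T)) hi)

end PFTproof
namespace PFTproof

section ZWords

variable {d : ℕ}

lemma zAt_eq (hd : 0 < d) (z : Fin d → Bool) (m : ℕ) :
    zAt z m = z ⟨m % d, Nat.mod_lt _ hd⟩ := by
  unfold zAt
  rw [dif_pos (Nat.mod_lt _ hd)]

lemma zAt_coe (hd : 0 < d) (z : Fin d → Bool) (r : Fin d) : zAt z (r : ℕ) = z r := by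
  rw [zAt_eq hd]
  congr 1
  exact Fin.ext (Nat.mod_eq_of_lt r.isLt)

lemma zAt_congr (hd : 0 < d) (z : Fin d → Bool) {a b : ℕ} (h : a ≡ b [MOD d]) :
    zAt z a = zAt z b := by
  rw [zAt_eq hd, zAt_eq hd]
  congr 1
  exact Fin.ext h

lemma zAt_add_d (hd : 0 < d) (z : Fin d → Bool) (m : ℕ) : zAt z (m + d) = zAt z m :=
  zAt_congr hd z (by show (m + d) % d = m % d; exact Nat.add_mod_right m d)

lemma primLen_spec (hd : 0 < d) (z : Fin d → Bool) :
    0 < primLen z ∧ primLen z ∣ d ∧ ∀ m, zAt z (m + primLen z) = zAt z m := by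
  have hne : {L : ℕ | 0 < L ∧ L ∣ d ∧ ∀ m : ℕ, zAt z (m + L) = zAt z m}.Nonempty :=
    ⟨d, hd, dvd_rfl, fun m => zAt_add_d hd z m⟩
  exact Nat.sInf_mem hne

lemma zAt_add_mul (z : Fin d → Bool) {p : ℕ} (hper : ∀ m, zAt z (m + p) = zAt z m) :
    ∀ (q m : ℕ), zAt z (m + q * p) = zAt z m := by
  intro q
  induction q with
  | zero => simp
  | succ q ih =>
      intro m
      have h1 : m + (q + 1) * p = (m + q * p) + p := by ring
      rw [h1, hper, ih]

lemma zAt_mod_period (z : Fin d → Bool) {p : ℕ} (hp : 0 < p)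
    (hper : ∀ m, zAt z (m + p) = zAt z m) (m : ℕ) : zAt z m = zAt z (m % p) := by
  conv_lhs => rw [← Nat.mod_add_div m p, mul_comm]
  exact zAt_add_mul z hper (m / p) (m % p)

lemma zAt_congr_period (z : Fin d → Bool) {p : ℕ} (hp : 0 < p)
    (hper : ∀ m, zAt z (m + p) = zAt z m) {a b : ℕ} (h : a ≡ b [MOD p]) :
    zAt z a = zAt z b := by
  rw [zAt_mod_period z hp hper a, zAt_mod_period z hp hper b, h]

lemma period_mod (z : Fin d → Bool) {L : ℕ} (hL : 0 < L)
    (hLp : ∀ m, zAt z (m + L) = zAt z m) :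
    ∀ p : ℕ, (∀ m, zAt z (m + p) = zAt z m) → ∀ m, zAt z (m + p % L) = zAt z m := by
  intro p
  induction p using Nat.strong_induction_on with
  | _ p ih =>
    intro hp m
    by_cases h : p < L
    · rw [Nat.mod_eq_of_lt h]; exact hp m
    · push_neg at h
      have hsub : ∀ m', zAt z (m' + (p - L)) = zAt z m' := by
        intro m'
        have h1 := hLp (m' + (p - L))
        have h2 : m' + (p - L) + L = m' + p := by omega
        rw [h2] at h1
        rw [← h1, hp]
      have := ih (p - L) (by omega) hsub m
      rwa [Nat.mod_eq_sub_mod h]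

lemma period_gcd (z : Fin d → Bool) (p q : ℕ)
    (hp : ∀ m, zAt z (m + p) = zAt z m) (hq : ∀ m, zAt z (m + q) = zAt z m) :
    ∀ m, zAt z (m + Nat.gcd p q) = zAt z m := by
  induction p, q using Nat.gcd.induction with
  | H0 n => simpa using hq
  | H1 m n hm ih =>
      rw [Nat.gcd_rec]
      exact ih (period_mod z hm hp n hq) hp

lemma primLen_le_period (hd : 0 < d) (z : Fin d → Bool) {p : ℕ} (hp : 0 < p)
    (hper : ∀ m, zAt z (m + p) = zAt z m) : primLen z ≤ p := by
  have hg : ∀ m, zAt z (m + Nat.gcd p d) = zAt z m :=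
    period_gcd z p d hper (zAt_add_d hd z)
  have hmem : Nat.gcd p d ∈ {L : ℕ | 0 < L ∧ L ∣ d ∧ ∀ m : ℕ, zAt z (m + L) = zAt z m} :=
    ⟨Nat.gcd_pos_of_pos_left _ hp, Nat.gcd_dvd_right p d, hg⟩
  have h1 : primLen z ≤ Nat.gcd p d := Nat.sInf_le hmem
  exact h1.trans (Nat.gcd_le_left _ hp)

/-- The cyclic shift of `z` by `t`. -/
def shiftW (z : Fin d → Bool) (t : ℕ) : Fin d → Bool := fun m => zAt z ((m : ℕ) + t)

lemma zAt_shiftW (hd : 0 < d) (z : Fin d → Bool) (t k : ℕ) :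
    zAt (shiftW z t) k = zAt z (k + t) := by
  rw [zAt_eq hd]
  show zAt z (k % d + t) = zAt z (k + t)
  exact zAt_congr hd z (Nat.ModEq.add_right t (Nat.mod_modEq k d))

lemma shiftW_zero (hd : 0 < d) (z : Fin d → Bool) : shiftW z 0 = z := by
  funext m
  show zAt z ((m : ℕ) + 0) = z m
  rw [add_zero, zAt_coe hd]

lemma shiftW_congr (hd : 0 < d) (z : Fin d → Bool) {s t : ℕ}
    (h : s ≡ t [MOD primLen z]) : shiftW z s = shiftW z t := by
  obtain ⟨hL, hLd, hper⟩ := primLen_spec hd z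
  funext m
  exact zAt_congr_period z hL hper (Nat.ModEq.add_left _ h)

/-- Number of `1`s in `y`. -/
def onesD (y : Fin d → Bool) : ℕ := (Finset.univ.filter (fun r : Fin d => y r = true)).card

lemma onesD_eq_sum (y : Fin d → Bool) :
    onesD y = ∑ r : Fin d, if y r = true then 1 else 0 :=
  Finset.card_filter _ _

lemma onesD_shiftW (hd : 0 < d) (z : Fin d → Bool) (t : ℕ) :
    onesD (shiftW z t) = onesD z := by
  have hinj : Function.Injective (fun r : Fin d => (⟨((r : ℕ) + t) % d, Nat.mod_lt _ hd⟩ : Fin d)) := by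
    intro r s hrs
    have h1 : ((r : ℕ) + t) % d = ((s : ℕ) + t) % d := congrArg Fin.val hrs
    have h2 : (r : ℕ) ≡ (s : ℕ) [MOD d] := Nat.ModEq.add_right_cancel' t h1
    exact Fin.ext (by simpa [Nat.ModEq, Nat.mod_eq_of_lt r.isLt, Nat.mod_eq_of_lt s.isLt] using h2)
  rw [onesD_eq_sum, onesD_eq_sum]
  refine Fintype.sum_bijective _ (Finite.injective_iff_bijective.1 hinj)
    (fun r => if shiftW z t r = true then 1 else 0)
    (fun r => if z r = true then 1 else 0) ?_
  intro r
  have hz : shiftW z t r = z ⟨((r : ℕ) + t) % d, Nat.mod_lt _ hd⟩ := by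
    show zAt z ((r : ℕ) + t) = _
    rw [zAt_eq hd]
  simp only [hz]

lemma onesD_eq_copies_mul_ones (hd : 0 < d) (z : Fin d → Bool) :
    onesD z = primCopies z * primOnes z := by
  obtain ⟨hL, hLd, hper⟩ := primLen_spec hd z
  set L := primLen z with hLdef
  set N := primCopies z with hNdef
  set F : ℕ → ℕ := fun m => if zAt z m = true then 1 else 0 with hFdef
  have hdNL : d = N * L := by
    rw [hNdef]
    show d = d / L * L
    rw [Nat.div_mul_cancel hLd]
  have h1 : onesD z = ∑ m : Fin d, F (m : ℕ) := by
    rw [onesD_eq_sum]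
    exact Finset.sum_congr rfl fun r _ => by simp only [hFdef]; rw [zAt_coe hd]
  have hcast : ∑ m : Fin d, F (m : ℕ) = ∑ m : Fin (N * L), F (m : ℕ) :=
    Fintype.sum_equiv (finCongr hdNL) _ _ (fun m => by simp)
  have h3 : ∑ m : Fin (N * L), F (m : ℕ)
      = ∑ p : Fin N × Fin L, F ((finProdFinEquiv p : Fin (N * L)) : ℕ) :=
    (Equiv.sum_comp finProdFinEquiv (fun m : Fin (N * L) => F (m : ℕ))).symm
  have h4 : ∀ p : Fin N × Fin L, F ((finProdFinEquiv p : Fin (N * L)) : ℕ) = F (p.2 : ℕ) := by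
    intro p
    rw [finProdFinEquiv_apply_val]
    show (if zAt z ((p.2 : ℕ) + L * (p.1 : ℕ)) = true then 1 else 0) = _
    rw [mul_comm L, zAt_add_mul z hper]
  have h5 : ∑ r : Fin L, F (r : ℕ) = primOnes z := by
    rw [Fin.sum_univ_eq_sum_range F L]
    exact (Finset.card_filter _ _).symm
  rw [h1, hcast, h3, Finset.sum_congr rfl (fun p _ => h4 p), Fintype.sum_prod_type]
  simp only [Finset.sum_const, Finset.card_univ, Fintype.card_fin, smul_eq_mul]
  rw [h5]

end ZWords

end PFTproof
namespace PFTproof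

/-- `zAt` read at an integer index (mod `d`). -/
def zAtZ {d : ℕ} (z : Fin d → Bool) (w : ℤ) : Bool := zAt z ((w % (d : ℤ)).toNat)

variable {d : ℕ}

lemma zAtZ_coe (hd : 0 < d) (z : Fin d → Bool) (c : ℕ) : zAtZ z (c : ℤ) = zAt z c := by
  unfold zAtZ
  have h1 : ((c : ℤ) % (d : ℤ)) = ((c % d : ℕ) : ℤ) := by push_cast; ring
  rw [h1, Int.toNat_natCast]
  exact zAt_congr hd z (Nat.mod_modEq c d)

lemma zAtZ_congr (hd : 0 < d) (z : Fin d → Bool) {a b : ℤ} (h : (d : ℤ) ∣ a - b) :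
    zAtZ z a = zAtZ z b := by
  unfold zAtZ
  have h1 : a % (d : ℤ) = b % (d : ℤ) := by
    have h2 : b ≡ a [ZMOD (d : ℤ)] := Int.modEq_iff_dvd.mpr h
    exact h2.symm
  rw [h1]

section Count

variable {A : Type} [Fintype A] {ℓ n : ℕ}

/-- position `j` of the periodization of `f` is OK. -/
def okp (F0 : Set (Word A ℓ)) (hn : 0 < n) (f : Fin n → A) (j : ℤ) : Prop :=
  (win (periodize hn f) j : Word A ℓ) ∉ F0

/-- all positions `≡ r (mod d)` are OK. -/
def Sr (F0 : Set (Word A ℓ)) (hn : 0 < n) (r : Fin d) (f : Fin n → A) : Prop :=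
  ∀ j : ℤ, (d : ℤ) ∣ j - ((r : ℕ) : ℤ) → okp F0 hn f j

/-- all positions `j` with `z_{j+t} = 1` are OK. -/
def CondC (F0 : Set (Word A ℓ)) (hn : 0 < n) (z : Fin d → Bool) (t : ℕ)
    (f : Fin n → A) : Prop :=
  ∀ j : ℤ, zAtZ z (j + (t : ℤ)) = true → okp F0 hn f j

lemma condC_iff (hd : 0 < d) (F0 : Set (Word A ℓ)) (hn : 0 < n) (z : Fin d → Bool)
    (t : ℕ) (f : Fin n → A) :
    CondC F0 hn z t f ↔ ∀ r : Fin d, shiftW z t r = true → Sr F0 hn r f := by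
  constructor
  · intro hc r hr j hj
    refine hc j ?_
    have h1 : zAtZ z (j + (t : ℤ)) = zAtZ z (((r : ℕ) + t : ℕ) : ℤ) := by
      apply zAtZ_congr hd
      push_cast
      have : j + (t:ℤ) - ((r:ℕ) + (t:ℤ)) = j - (r:ℕ) := by ring
      rw [this]
      exact hj
    rw [h1, zAtZ_coe hd]
    exact hr
  · intro hall j hj
    set r : Fin d := ⟨((j % (d:ℤ)).toNat), by
      have h1 : 0 ≤ j % (d:ℤ) := Int.emod_nonneg _ (by exact_mod_cast hd.ne')
      have h2 : j % (d:ℤ) < (d:ℤ) := Int.emod_lt_of_pos _ (by exact_mod_cast hd)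
      omega⟩ with hrdef
    have hdvd : (d : ℤ) ∣ j - ((r : ℕ) : ℤ) := by
      have h1 : 0 ≤ j % (d:ℤ) := Int.emod_nonneg _ (by exact_mod_cast hd.ne')
      have h2 : ((r : ℕ) : ℤ) = j % (d:ℤ) := by
        rw [hrdef]
        exact Int.toNat_of_nonneg h1
      rw [h2, Int.emod_def]
      exact ⟨j / d, by ring⟩
    refine hall r ?_ j hdvd
    show zAt z ((r : ℕ) + t) = true
    have h3 : zAt z ((r : ℕ) + t) = zAtZ z (((r : ℕ) + t : ℕ) : ℤ) := (zAtZ_coe hd z _).symm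
    rw [h3]
    have h4 : zAtZ z (((r : ℕ) + t : ℕ) : ℤ) = zAtZ z (j + (t : ℤ)) := by
      apply zAtZ_congr hd
      push_cast
      have : (r:ℕ) + (t:ℤ) - (j + t) = -(j - (r:ℕ)) := by ring
      rw [this]
      exact dvd_neg.mpr hdvd
    rw [h4]
    exact hj

/-- The set of `n`-periodic points of `X(F⁰,ℓ,d)` is in bijection with the set of
`f : Fin n → A` whose periodization lies in the shift. -/
noncomputable def perEquiv (F0 : Set (Word A ℓ)) (hn : 0 < n) (hd : 0 < d) :
    (pftPer F0 d n : Set (ℤ → A)) ≃ {f : Fin n → A // ∃ r : Fin d, Sr F0 hn r f} where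
  toFun x := ⟨fun k => x.1 ((k : ℕ) : ℤ), by
    obtain ⟨⟨r, hr, hF⟩, hper⟩ := x.2
    refine ⟨⟨r, hr⟩, ?_⟩
    intro j hj
    unfold okp
    have hw : (win (periodize hn (fun k : Fin n => x.1 ((k:ℕ):ℤ))) j : Word A ℓ)
        = win x.1 j := by
      funext k
      exact eq_periodize hn hper _
    rw [hw]
    have hw2 : (win x.1 j : Word A ℓ) = win x.1 ((j - (r:ℕ)) + (r:ℕ)) := by norm_num
    rw [hw2]
    exact hF (j - (r:ℕ)) hj⟩
  invFun f := ⟨periodize hn f.1, by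
    refine ⟨?_, fun i => periodize_per hn f.1 i⟩
    obtain ⟨r, hr⟩ := f.2
    refine ⟨(r : ℕ), r.isLt, ?_⟩
    intro i hi
    exact hr (i + (r:ℕ)) (by simpa using hi)⟩
  left_inv x := by
    apply Subtype.ext
    funext j
    exact eq_periodize hn x.2.2 j
  right_inv f := by
    apply Subtype.ext
    funext k
    exact periodize_coe hn f.1 k

lemma card_pftPer_eq (F0 : Set (Word A ℓ)) (hn : 0 < n) (hd : 0 < d) :
    Nat.card (pftPer F0 d n) = Nat.card {f : Fin n → A // ∃ r : Fin d, Sr F0 hn r f} :=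
  Nat.card_congr (perEquiv F0 hn hd)

/-- Inclusion–exclusion. -/
lemma card_union_IE (hd : 0 < d) (S : Fin d → (Fin n → A) → Prop) :
    (Nat.card {f : Fin n → A // ∃ r : Fin d, S r f} : ℚ) =
    ∑ y ∈ Finset.univ.filter (fun y : Fin d → Bool => ∃ i, y i = true),
      (-1 : ℚ) ^ (onesD y - 1) *
        (Nat.card {f : Fin n → A // ∀ r : Fin d, y r = true → S r f} : ℚ) := by
  classical
  have hcard : ∀ (P : (Fin n → A) → Prop),
      (Nat.card {f : Fin n → A // P f} : ℚ) = ∑ f : Fin n → A, if P f then (1:ℚ) else 0 := by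
    intro P
    rw [Nat.card_eq_fintype_card, Fintype.card_subtype]
    exact (Finset.sum_boole _ _).symm
  rw [hcard]
  set χ : Fin d → (Fin n → A) → ℚ := fun r f => if S r f then 1 else 0 with hχ
  have step1 : ∀ f : Fin n → A,
      (if ∃ r, S r f then (1:ℚ) else 0) = 1 - ∏ r : Fin d, (1 - χ r f) := by
    intro f
    by_cases h : ∃ r, S r f
    · rw [if_pos h]
      obtain ⟨r0, hr0⟩ := h
      rw [Finset.prod_eq_zero (Finset.mem_univ r0) (by simp [hχ, hr0])]
      ring
    · rw [if_neg h]
      push_neg at h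
      rw [Finset.prod_eq_one (fun r _ => by simp [hχ, h r])]
      ring
  have step2 : ∀ f : Fin n → A,
      ∏ r : Fin d, (1 - χ r f)
        = ∑ t ∈ (Finset.univ : Finset (Fin d)).powerset,
            (-1:ℚ) ^ t.card * (if ∀ r ∈ t, S r f then 1 else 0) := by
    intro f
    have h1 : ∀ r : Fin d, (1 - χ r f) = (-(χ r f)) + 1 := fun r => by ring
    rw [Finset.prod_congr rfl (fun r _ => h1 r), Finset.prod_add]
    refine Finset.sum_congr rfl fun t _ => ?_
    rw [Finset.prod_const_one, mul_one]
    have h2 : ∏ r ∈ t, (-(χ r f)) = (-1:ℚ)^t.card * ∏ r ∈ t, χ r f := by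
      rw [Finset.prod_congr rfl (fun r _ => by ring : ∀ r ∈ t, -(χ r f) = (-1) * χ r f),
        Finset.prod_mul_distrib, Finset.prod_const]
    rw [h2, hχ]
    congr 1
    simp only []
    rw [Finset.prod_boole]
    simp
  have hsplit : ∀ f : Fin n → A,
      (if ∃ r, S r f then (1:ℚ) else 0)
        = ∑ t ∈ ((Finset.univ : Finset (Fin d)).powerset.erase ∅),
            (-1:ℚ) ^ (t.card - 1) * (if ∀ r ∈ t, S r f then 1 else 0) := by
    intro f
    rw [step1 f, step2 f]
    rw [← Finset.sum_erase_add _ _ (Finset.empty_mem_powerset _)]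
    have hemp : (if ∀ r ∈ (∅ : Finset (Fin d)), S r f then (1:ℚ) else 0) = 1 := by simp
    rw [Finset.card_empty, pow_zero, one_mul, hemp]
    have h3 : ∀ t ∈ (Finset.univ : Finset (Fin d)).powerset.erase ∅,
        (-1:ℚ) ^ t.card * (if ∀ r ∈ t, S r f then 1 else 0)
          = -((-1:ℚ) ^ (t.card - 1) * (if ∀ r ∈ t, S r f then 1 else 0)) := by
      intro t ht
      have hne : t ≠ ∅ := (Finset.mem_erase.1 ht).1
      have hpos : 0 < t.card := Finset.card_pos.2 (Finset.nonempty_iff_ne_empty.2 hne)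
      have hc : t.card = (t.card - 1) + 1 := by omega
      have hp : (-1:ℚ) ^ t.card = -((-1:ℚ) ^ (t.card - 1)) := by
        conv_lhs => rw [hc]
        rw [pow_succ]
        ring
      rw [hp]
      ring
    rw [Finset.sum_congr rfl h3, Finset.sum_neg_distrib]
    ring
  refine Eq.trans (?_ : _ = ∑ f : Fin n → A, if ∃ r, S r f then (1:ℚ) else 0) ?_
  · exact Finset.sum_congr rfl fun f _ => by congr
  refine Eq.trans (Finset.sum_congr rfl (fun f _ => hsplit f)) ?_
  rw [Finset.sum_comm]
  -- now: ∑ t ∈ erase ∅, ∑ f, ... = RHS, reindex t ↦ indicator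
  have hinner : ∀ t : Finset (Fin d),
      ∑ f : Fin n → A, (-1:ℚ) ^ (t.card - 1) * (if ∀ r ∈ t, S r f then 1 else 0)
        = (-1:ℚ) ^ (t.card - 1) * (Nat.card {f : Fin n → A // ∀ r ∈ t, S r f} : ℚ) := by
    intro t
    rw [← Finset.mul_sum]
    congr 1
    rw [hcard]
    exact Finset.sum_congr rfl fun f _ => by congr
  rw [Finset.sum_congr rfl (fun t _ => hinner t)]
  refine Finset.sum_nbij' (fun t => fun r : Fin d => decide (r ∈ t))
    (fun y => Finset.univ.filter (fun r => y r = true)) ?_ ?_ ?_ ?_ ?_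
  · intro t ht
    have hne : t ≠ ∅ := (Finset.mem_erase.1 ht).1
    obtain ⟨r, hr⟩ := Finset.nonempty_iff_ne_empty.2 hne
    simp only [Finset.mem_filter, Finset.mem_univ, true_and]
    exact ⟨r, by simp [hr]⟩
  · intro y hy
    simp only [Finset.mem_filter, Finset.mem_univ, true_and] at hy
    obtain ⟨i, hi⟩ := hy
    simp only [Finset.mem_erase, Finset.mem_powerset]
    constructor
    · intro hcon
      have hmem : i ∈ Finset.univ.filter (fun r => y r = true) := by simp [hi]
      rw [hcon] at hmem
      exact absurd hmem (Finset.notMem_empty i)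
    · exact Finset.filter_subset _ _
  · intro t _
    ext r
    simp
  · intro y _
    funext r
    simp
  · intro t ht
    have h1 : onesD (fun r : Fin d => decide (r ∈ t)) = t.card := by
      unfold onesD
      congr 1
      ext r
      simp
    rw [h1]
    congr 1
    apply congrArg
    apply Nat.card_congr
    apply Equiv.subtypeEquivRight
    intro f
    constructor
    · intro h r hr
      exact h r (by simpa using hr)
    · intro h r hr
      exact h r (by simpa using hr)

end Count

end PFTproof
namespace PFTproof

section Walks

variable {V : Type} [Fintype V] [DecidableEq V]

lemma sum_cons_split {W : Type} [Fintype W] {m : ℕ} (F : (Fin (m+1) → W) → ℚ) :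
    ∑ g : Fin (m+1) → W, F g = ∑ w : W, ∑ g' : Fin m → W, F (Fin.cons w g') := by
  have h1 : ∑ p : W × (Fin m → W), F (Fin.cons p.1 p.2) = ∑ g : Fin (m+1) → W, F g := by
    refine Fintype.sum_bijective
      (fun p : W × (Fin m → W) => (Fin.cons p.1 p.2 : Fin (m+1) → W)) ?_ _ _ (fun p => rfl)
    exact (Fin.consEquiv (fun _ : Fin (m+1) => W)).bijective
  rw [← h1, Fintype.sum_prod_type]

lemma pow_apply_walks (M : Matrix V V ℚ) :
    ∀ (m : ℕ) (u v : V), (M ^ m) u v =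
      ∑ g : Fin (m + 1) → V,
        if g 0 = u ∧ g (Fin.last m) = v
        then ∏ k : Fin m, M (g k.castSucc) (g k.succ) else 0 := by
  intro m
  induction m with
  | zero =>
      intro u v
      rw [pow_zero, Matrix.one_apply]
      have h1 : ∀ g : Fin 1 → V,
          (if g 0 = u ∧ g (Fin.last 0) = v
            then ∏ k : Fin 0, M (g k.castSucc) (g k.succ) else 0)
          = if g 0 = u then (if g 0 = v then (1:ℚ) else 0) else 0 := by
        intro g
        rw [show (Fin.last 0) = 0 from rfl, ite_and]
        congr 1
      rw [Finset.sum_congr rfl fun g _ => h1 g]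
      rw [Fintype.sum_equiv (Equiv.funUnique (Fin 1) V)
        (fun g => if g 0 = u then (if g 0 = v then (1:ℚ) else 0) else 0)
        (fun w => if w = u then (if w = v then (1:ℚ) else 0) else 0) (fun g => rfl)]
      rw [Finset.sum_ite_eq' Finset.univ u (fun w => if w = v then (1:ℚ) else 0)]
      all_goals simp
  | succ m ih =>
      intro u v
      rw [pow_succ', Matrix.mul_apply]
      have hterm : ∀ (w : V) (g' : Fin (m+1) → V),
          (if (Fin.cons w g' : Fin (m+2) → V) 0 = u ∧
            (Fin.cons w g' : Fin (m+2) → V) (Fin.last (m+1)) = v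
            then ∏ k : Fin (m+1), M ((Fin.cons w g' : Fin (m+2) → V) k.castSucc)
              ((Fin.cons w g' : Fin (m+2) → V) k.succ) else 0)
          = if w = u then (if g' (Fin.last m) = v
              then M w (g' 0) * ∏ k : Fin m, M (g' k.castSucc) (g' k.succ) else 0) else 0 := by
        intro w g'
        have hc0 : (Fin.cons w g' : Fin (m+2) → V) 0 = w := rfl
        have hlast : (Fin.cons w g' : Fin (m+2) → V) (Fin.last (m+1)) = g' (Fin.last m) := by
          rw [← Fin.succ_last, Fin.cons_succ]
        have hprod : ∏ k : Fin (m+1), M ((Fin.cons w g' : Fin (m+2) → V) k.castSucc)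
            ((Fin.cons w g' : Fin (m+2) → V) k.succ)
            = M w (g' 0) * ∏ k : Fin m, M (g' k.castSucc) (g' k.succ) := by
          rw [Fin.prod_univ_succ]
          refine congrArg₂ (· * ·) ?_ ?_
          · simp [Fin.castSucc_zero, Fin.cons_succ, Fin.cons_zero]
          · refine Finset.prod_congr rfl fun k _ => ?_
            rw [← Fin.succ_castSucc, Fin.cons_succ, Fin.cons_succ]
        rw [hc0, hlast, hprod, ite_and]
      have hsum : ∀ w, M u w * (M ^ m) w v
          = ∑ g' : Fin (m+1) → V, if g' 0 = w ∧ g' (Fin.last m) = v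
              then M u w * ∏ k : Fin m, M (g' k.castSucc) (g' k.succ) else 0 := by
        intro w
        rw [ih, Finset.mul_sum]
        exact Finset.sum_congr rfl fun g' _ => by rw [mul_ite, mul_zero]
      calc ∑ w, M u w * (M ^ m) w v
          = ∑ w, ∑ g' : Fin (m+1) → V, if g' 0 = w ∧ g' (Fin.last m) = v
              then M u w * ∏ k : Fin m, M (g' k.castSucc) (g' k.succ) else 0 :=
            Finset.sum_congr rfl fun w _ => hsum w
        _ = ∑ g' : Fin (m+1) → V, ∑ w, if g' 0 = w ∧ g' (Fin.last m) = v
              then M u w * ∏ k : Fin m, M (g' k.castSucc) (g' k.succ) else 0 :=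
            Finset.sum_comm
        _ = ∑ g' : Fin (m+1) → V, if g' (Fin.last m) = v
              then M u (g' 0) * ∏ k : Fin m, M (g' k.castSucc) (g' k.succ) else 0 := by
            refine Finset.sum_congr rfl fun g' _ => ?_
            by_cases hv : g' (Fin.last m) = v
            · simp only [hv, and_true]
              rw [Finset.sum_ite_eq Finset.univ (g' 0)
                (fun w => M u w * ∏ k : Fin m, M (g' k.castSucc) (g' k.succ))]
              simp only [Finset.mem_univ, if_true, if_pos rfl]
            · simp [hv]
        _ = ∑ w, ∑ g' : Fin (m+1) → V,
              (if (Fin.cons w g' : Fin (m+2) → V) 0 = u ∧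
                (Fin.cons w g' : Fin (m+2) → V) (Fin.last (m+1)) = v
                then ∏ k : Fin (m+1), M ((Fin.cons w g' : Fin (m+2) → V) k.castSucc)
                  ((Fin.cons w g' : Fin (m+2) → V) k.succ) else 0) := by
            symm
            calc ∑ w, ∑ g' : Fin (m+1) → V,
                  (if (Fin.cons w g' : Fin (m+2) → V) 0 = u ∧
                    (Fin.cons w g' : Fin (m+2) → V) (Fin.last (m+1)) = v
                    then ∏ k : Fin (m+1), M ((Fin.cons w g' : Fin (m+2) → V) k.castSucc)
                      ((Fin.cons w g' : Fin (m+2) → V) k.succ) else 0)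
                = ∑ w, if w = u then (∑ g' : Fin (m+1) → V, if g' (Fin.last m) = v
                    then M w (g' 0) * ∏ k : Fin m, M (g' k.castSucc) (g' k.succ) else 0)
                    else 0 := by
                  refine Finset.sum_congr rfl fun w _ => ?_
                  rw [Finset.sum_congr rfl fun g' _ => hterm w g']
                  by_cases hw : w = u
                  · simp [hw]
                  · simp [hw]
              _ = ∑ g' : Fin (m+1) → V, if g' (Fin.last m) = v
                    then M u (g' 0) * ∏ k : Fin m, M (g' k.castSucc) (g' k.succ) else 0 := by
                  rw [Finset.sum_ite_eq' Finset.univ u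
                    (fun w => ∑ g' : Fin (m+1) → V, if g' (Fin.last m) = v
                      then M w (g' 0) * ∏ k : Fin m, M (g' k.castSucc) (g' k.succ) else 0)]
                  simp only [Finset.mem_univ, if_true]
        _ = ∑ g : Fin (m+2) → V, if g 0 = u ∧ g (Fin.last (m+1)) = v
              then ∏ k : Fin (m+1), M (g k.castSucc) (g k.succ) else 0 :=
            (sum_cons_split (fun g : Fin (m+2) → V => if g 0 = u ∧ g (Fin.last (m+1)) = v
              then ∏ k : Fin (m+1), M (g k.castSucc) (g k.succ) else 0)).symm

lemma trace_pow_eq_card (R : V → V → Prop) [instR : ∀ u v, Decidable (R u v)] (M : Matrix V V ℚ)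
    (hM : ∀ u v, M u v = if R u v then 1 else 0) (n : ℕ) :
    Matrix.trace (M ^ n)
      = (Nat.card {g : Fin (n+1) → V //
          g (Fin.last n) = g 0 ∧ ∀ k : Fin n, R (g k.castSucc) (g k.succ)} : ℚ) := by
  classical
  have h1 : Matrix.trace (M ^ n) = ∑ u, (M ^ n) u u := rfl
  rw [h1]
  calc ∑ u, (M ^ n) u u
      = ∑ u, ∑ g : Fin (n+1) → V, (if g 0 = u ∧ g (Fin.last n) = u
          then ∏ k : Fin n, M (g k.castSucc) (g k.succ) else 0) :=
        Finset.sum_congr rfl fun u _ => pow_apply_walks M n u u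
    _ = ∑ g : Fin (n+1) → V, ∑ u, (if g 0 = u ∧ g (Fin.last n) = u
          then ∏ k : Fin n, M (g k.castSucc) (g k.succ) else 0) := Finset.sum_comm
    _ = ∑ g : Fin (n+1) → V, (if g (Fin.last n) = g 0
          then ∏ k : Fin n, M (g k.castSucc) (g k.succ) else 0) := by
        refine Finset.sum_congr rfl fun g _ => ?_
        by_cases hc : g (Fin.last n) = g 0
        · rw [if_pos hc]
          have hcond : ∀ u, (g 0 = u ∧ g (Fin.last n) = u) ↔ (g 0 = u) := by
            intro u
            constructor
            · exact fun h => h.1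
            · intro h; exact ⟨h, hc.trans h⟩
          rw [Finset.sum_congr rfl fun u _ => if_congr (hcond u) rfl rfl]
          rw [Finset.sum_ite_eq Finset.univ (g 0)
            (fun _ => ∏ k : Fin n, M (g k.castSucc) (g k.succ))]
          simp only [Finset.mem_univ, if_true]
        · rw [if_neg hc]
          refine Finset.sum_eq_zero fun u _ => ?_
          rw [if_neg]
          rintro ⟨h0, hl⟩
          exact hc (hl.trans h0.symm)
    _ = ∑ g : Fin (n+1) → V, (if g (Fin.last n) = g 0 ∧ (∀ k : Fin n, R (g k.castSucc) (g k.succ))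
          then (1:ℚ) else 0) := by
        refine Finset.sum_congr rfl fun g _ => ?_
        have hp : ∏ k : Fin n, M (g k.castSucc) (g k.succ)
            = if (∀ k : Fin n, R (g k.castSucc) (g k.succ)) then (1:ℚ) else 0 := by
          rw [Finset.prod_congr rfl fun k _ => hM (g k.castSucc) (g k.succ),
            Finset.prod_boole]
          congr 1
          simp
        rw [hp, ite_and]
    _ = ((Finset.univ.filter (fun g : Fin (n+1) → V =>
          g (Fin.last n) = g 0 ∧ ∀ k : Fin n, R (g k.castSucc) (g k.succ))).card : ℚ) := by
        rw [Finset.sum_boole]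
    _ = _ := by
        rw [Nat.card_eq_fintype_card, Fintype.card_subtype]

end Walks

end PFTproof
namespace PFTproof

section TraceZ

variable {A : Type} [Fintype A] {ℓ n d : ℕ}

/-- Cyclic extension of a closed walk. -/
def GG {V : Type} (hn : 0 < n) (g : Fin (n + 1) → V) (m : ℕ) : V :=
  g ⟨m % n, by have := Nat.mod_lt m hn; omega⟩

lemma GG_congr {V : Type} (hn : 0 < n) (g : Fin (n + 1) → V) {a b : ℕ}
    (h : a ≡ b [MOD n]) : GG hn g a = GG hn g b := by
  unfold GG
  congr 1
  exact Fin.ext h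

lemma GG_fin {V : Type} (hn : 0 < n) (g : Fin (n + 1) → V)
    (hcl : g (Fin.last n) = g 0) (m : Fin (n + 1)) : GG hn g (m : ℕ) = g m := by
  by_cases h : (m : ℕ) < n
  · unfold GG
    congr 1
    exact Fin.ext (Nat.mod_eq_of_lt h)
  · have hm : (m : ℕ) = n := by omega
    have h1 : m = Fin.last n := Fin.ext (by simpa using hm)
    rw [h1, hcl]
    unfold GG
    congr 1
    apply Fin.ext
    simp [hm, Nat.mod_self]

lemma GG_adj {V : Type} (hn : 0 < n) (g : Fin (n + 1) → V) (R : V → V → Prop)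
    (hcl : g (Fin.last n) = g 0) (hadj : ∀ k : Fin n, R (g k.castSucc) (g k.succ)) :
    ∀ m : ℕ, R (GG hn g m) (GG hn g (m + 1)) := by
  intro m
  set k : Fin n := ⟨m % n, Nat.mod_lt m hn⟩ with hk
  have h1 : GG hn g m = g k.castSucc := by
    unfold GG
    congr 1
  have h2 : GG hn g (m + 1) = g k.succ := by
    by_cases h : m % n + 1 = n
    · have h0 : (m + 1) % n = 0 := by
        rw [show (m + 1) % n = (m % n + 1) % n from ((Nat.mod_modEq m n).add_right 1).symm,
          h, Nat.mod_self]
      have h4 : GG hn g (m + 1) = g 0 := by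
        unfold GG
        congr 1
        apply Fin.ext
        simp [h0]
      have h5 : k.succ = Fin.last n := by
        apply Fin.ext
        show m % n + 1 = n
        exact h
      rw [h4, h5, hcl]
    · have h6 : (m + 1) % n = m % n + 1 := by
        rw [show (m + 1) % n = (m % n + 1) % n from ((Nat.mod_modEq m n).add_right 1).symm]
        have hmn := Nat.mod_lt m hn
        exact Nat.mod_eq_of_lt (by omega)
      unfold GG
      congr 1
      apply Fin.ext
      simp [h6, hk]
  rw [h1, h2]
  exact hadj k

variable (F0 : Set (Word A ℓ))

/-- The labels of a walk in a WBG over `zGraph`. -/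
def lblW (hℓ : 1 ≤ ℓ) {z : Fin d → Bool} (g : Fin (n + 1) → (zGraph F0 z).Vertex) :
    Fin n → A :=
  fun k => (g k.succ).1.2 ⟨ℓ - 1, by omega⟩

lemma GG_phase (hn : 0 < n) {z : Fin d → Bool}
    (g : Fin (n + 1) → (zGraph F0 z).Vertex)
    (hcl : g (Fin.last n) = g 0)
    (hadj : ∀ k : Fin n, ∃ a, (zGraph F0 z).Edge (g k.castSucc) (g k.succ) a) :
    ∀ m : ℕ, ((GG hn g m).1.1 : ℕ) = (((g 0).1.1 : ℕ) + m) % primLen z := by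
  have hGadj := GG_adj hn g (fun u v => ∃ a, (zGraph F0 z).Edge u v a) hcl hadj
  intro m
  induction m with
  | zero =>
      have h00 : GG hn g 0 = g 0 := by simpa using GG_fin hn g hcl 0
      rw [h00]
      exact (Nat.mod_eq_of_lt ((g 0).1.1.isLt)).symm
  | succ m ih =>
      obtain ⟨a, ha⟩ := hGadj m
      rw [ha.1, ih, Nat.mod_add_mod]
      congr 1

lemma GG_word (hℓ : 1 ≤ ℓ) (hn : 0 < n) {z : Fin d → Bool}
    (g : Fin (n + 1) → (zGraph F0 z).Vertex)
    (hcl : g (Fin.last n) = g 0)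
    (hadj : ∀ k : Fin n, ∃ a, (zGraph F0 z).Edge (g k.castSucc) (g k.succ) a) :
    ∀ t : ℕ, t < ℓ → ∀ m : ℕ,
      (GG hn g m).1.2 ⟨ℓ - 1 - t, by omega⟩
        = periodize hn (lblW F0 hℓ g) ((m : ℤ) - 1 - (t : ℤ)) := by
  have hGadj := GG_adj hn g (fun u v => ∃ a, (zGraph F0 z).Edge u v a) hcl hadj
  set x := periodize hn (lblW F0 hℓ g) with hx
  have hxper : ∀ i : ℤ, x (i + (n : ℤ)) = x i := periodize_per hn _
  have hbase : ∀ k : ℕ, (GG hn g (k + 1)).1.2 ⟨ℓ - 1, by omega⟩ = x (k : ℤ) := by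
    intro k
    have h1 : GG hn g (k + 1) = GG hn g ((k % n) + 1) :=
      GG_congr hn g ((Nat.mod_modEq k n).symm.add_right 1)
    have h2 : GG hn g ((k % n) + 1) = g ((⟨k % n, Nat.mod_lt k hn⟩ : Fin n).succ) := by
      have h2' := GG_fin hn g hcl ((⟨k % n, Nat.mod_lt k hn⟩ : Fin n).succ)
      exact h2'
    have h3 : (g ((⟨k % n, Nat.mod_lt k hn⟩ : Fin n).succ)).1.2 ⟨ℓ - 1, by omega⟩
        = lblW F0 hℓ g ⟨k % n, Nat.mod_lt k hn⟩ := rfl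
    rw [h1, h2, h3]
    have h4 : x ((((⟨k % n, Nat.mod_lt k hn⟩ : Fin n) : ℕ)) : ℤ)
        = lblW F0 hℓ g ⟨k % n, Nat.mod_lt k hn⟩ := periodize_coe hn _ _
    rw [← h4]
    apply per_congr hxper
    refine ⟨-((k / n : ℕ) : ℤ), ?_⟩
    have h5 : n * (k / n) + k % n = k := Nat.div_add_mod k n
    have h6 : ((n * (k / n) + k % n : ℕ) : ℤ) = (k : ℤ) := by exact_mod_cast h5
    push_cast at h6 ⊢
    linarith
  intro t
  induction t with
  | zero =>
      intro ht m
      rcases m with _ | k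
      · have h1 : GG hn g 0 = GG hn g ((n - 1) + 1) := by
          apply GG_congr hn g
          show 0 % n = ((n - 1) + 1) % n
          rw [show (n - 1) + 1 = n by omega]
          simp [Nat.mod_self]
        have hgoal : (GG hn g 0).1.2 ⟨ℓ - 1 - 0, by omega⟩
            = (GG hn g ((n - 1) + 1)).1.2 ⟨ℓ - 1, by omega⟩ := by rw [h1]; exact rfl
        rw [hgoal, hbase (n - 1)]
        apply per_congr hxper
        refine ⟨1, ?_⟩
        push_cast
        omega
      · rw [show ((Nat.succ k : ℕ) : ℤ) - 1 - ((0 : ℕ) : ℤ) = (k : ℤ) by push_cast; ring]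
        exact hbase k
  | succ t iht =>
      intro ht m
      obtain ⟨a, ha⟩ := hGadj (m + n - 1)
      rw [show m + n - 1 + 1 = m + n by omega] at ha
      have hshift := ha.2.1 (ℓ - 1 - (t + 1)) (by omega)
      have hGmn : GG hn g (m + n) = GG hn g m :=
        GG_congr hn g (by show (m + n) % n = m % n; exact Nat.add_mod_right m n)
      rw [← hGmn, ← hshift,
        show (⟨ℓ - 1 - (t + 1) + 1, by omega⟩ : Fin ℓ) = ⟨ℓ - 1 - t, by omega⟩
          from Fin.ext (show ℓ - 1 - (t + 1) + 1 = ℓ - 1 - t by omega),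
        iht (by omega) (m + n - 1)]
      apply per_congr hxper
      refine ⟨1, ?_⟩
      push_cast
      omega

lemma GG_win (hℓ : 1 ≤ ℓ) (hn : 0 < n) {z : Fin d → Bool}
    (g : Fin (n + 1) → (zGraph F0 z).Vertex)
    (hcl : g (Fin.last n) = g 0)
    (hadj : ∀ k : Fin n, ∃ a, (zGraph F0 z).Edge (g k.castSucc) (g k.succ) a) :
    ∀ m : ℕ, (GG hn g m).1.2 = win (periodize hn (lblW F0 hℓ g)) ((m : ℤ) - (ℓ : ℤ)) := by
  intro m
  funext j
  have hjl := j.isLt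
  have h1 := GG_word F0 hℓ hn g hcl hadj (ℓ - 1 - (j : ℕ)) (by omega) m
  rw [show (⟨ℓ - 1 - (ℓ - 1 - (j : ℕ)), by omega⟩ : Fin ℓ) = j
    from Fin.ext (show ℓ - 1 - (ℓ - 1 - (j : ℕ)) = (j : ℕ) by omega)] at h1
  rw [h1]
  show periodize hn (lblW F0 hℓ g) _ = periodize hn (lblW F0 hℓ g) _
  congr 1
  omega

lemma walk_cond (hℓ : 1 ≤ ℓ) (hn : 0 < n) (hd : 0 < d) (hdn : d ∣ n) {z : Fin d → Bool}
    (g : Fin (n + 1) → (zGraph F0 z).Vertex)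
    (hcl : g (Fin.last n) = g 0)
    (hadj : ∀ k : Fin n, ∃ a, (zGraph F0 z).Edge (g k.castSucc) (g k.succ) a) :
    CondC F0 hn z (((g 0).1.1 : ℕ) + ℓ) (lblW F0 hℓ g) := by
  intro j hj
  obtain ⟨hL, hLd, hper⟩ := primLen_spec hd z
  set x := periodize hn (lblW F0 hℓ g) with hx
  have hxper : ∀ i : ℤ, x (i + (n : ℤ)) = x i := periodize_per hn _
  set p0 := ((g 0).1.1 : ℕ) with hp0
  set q : ℤ := (j + (ℓ : ℤ)) / (n : ℤ) with hq
  set m : ℕ := ((j + (ℓ : ℤ)) % (n : ℤ)).toNat with hm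
  have h0 : 0 ≤ (j + (ℓ : ℤ)) % (n : ℤ) := Int.emod_nonneg _ (by exact_mod_cast hn.ne')
  have h1 : (m : ℤ) = (j + (ℓ : ℤ)) % (n : ℤ) := Int.toNat_of_nonneg h0
  have h2 : (m : ℤ) - (j + (ℓ : ℤ)) = -((n : ℤ) * q) := by
    rw [h1, Int.emod_def, hq]
    ring
  have hwin : (win x j : Word A ℓ) = win x ((m : ℤ) - (ℓ : ℤ)) := by
    apply win_congr hxper
    exact ⟨q, by linarith⟩
  obtain ⟨c, hc⟩ := hdn
  have hcz : (n : ℤ) = (d : ℤ) * (c : ℤ) := by exact_mod_cast hc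
  have htrue : zAt z ((p0 + m) % primLen z) = true := by
    have e1 : zAt z ((p0 + m) % primLen z) = zAt z (p0 + m) :=
      zAt_congr_period z hL hper (Nat.mod_modEq _ _)
    have e2 : zAt z (p0 + m) = zAtZ z (((p0 + m : ℕ) : ℤ)) := (zAtZ_coe hd z _).symm
    have e3 : zAtZ z (((p0 + m : ℕ) : ℤ)) = zAtZ z (j + ((p0 + ℓ : ℕ) : ℤ)) := by
      apply zAtZ_congr hd z
      refine ⟨-((c : ℤ) * q), ?_⟩
      push_cast
      linear_combination h2 - q * hcz
    rw [e1, e2, e3]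
    exact hj
  have hph := GG_phase F0 hn g hcl hadj m
  have hzg : zAt z (((GG hn g m).1.1 : ℕ)) = true := by rw [hph]; exact htrue
  have hmem : (GG hn g m).1.2 ∈
      (if zAt z (((GG hn g m).1.1 : ℕ)) then {w : Word A ℓ | w ∉ F0} else Set.univ) :=
    (GG hn g m).2
  rw [if_pos hzg] at hmem
  rw [GG_win F0 hℓ hn g hcl hadj m] at hmem
  show (win x j : Word A ℓ) ∉ F0
  rw [hwin]
  exact hmem

/-- Vertex at time `m` of the walk generated by phase `i` and labels `f`. -/
noncomputable def mkVtx (hℓ : 1 ≤ ℓ) (hn : 0 < n) (hd : 0 < d) {z : Fin d → Bool}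
    (i : Fin (primLen z)) (f : Fin n → A) (hf : CondC F0 hn z ((i : ℕ) + ℓ) f) (m : ℕ) :
    (zGraph F0 z).Vertex :=
  ⟨(⟨((i : ℕ) + m) % primLen z, Nat.mod_lt _ (primLen_spec hd z).1⟩,
    win (periodize hn f) ((m : ℤ) - (ℓ : ℤ))), by
    by_cases hz : zAt z (((i : ℕ) + m) % primLen z) = true
    · have hok : (win (periodize hn f) ((m : ℤ) - (ℓ : ℤ)) : Word A ℓ) ∉ F0 := by
        apply hf ((m : ℤ) - (ℓ : ℤ))
        have e3 : zAtZ z (((m : ℤ) - (ℓ : ℤ)) + (((i : ℕ) + ℓ : ℕ) : ℤ))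
            = zAtZ z ((((i : ℕ) + m : ℕ)) : ℤ) := by
          apply zAtZ_congr hd z
          refine ⟨0, ?_⟩
          push_cast
          ring
        rw [e3, zAtZ_coe hd z]
        obtain ⟨hL, hLd, hper⟩ := primLen_spec hd z
        rw [zAt_mod_period z hL hper ((i : ℕ) + m)]
        exact hz
      show _ ∈ (if zAt z (((i : ℕ) + m) % primLen z) then {w : Word A ℓ | w ∉ F0}
        else Set.univ)
      rw [if_pos hz]
      exact hok
    · show _ ∈ (if zAt z (((i : ℕ) + m) % primLen z) then {w : Word A ℓ | w ∉ F0}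
        else Set.univ)
      rw [if_neg hz]
      trivial⟩

lemma mkVtx_edge (hℓ : 1 ≤ ℓ) (hn : 0 < n) (hd : 0 < d) {z : Fin d → Bool}
    (i : Fin (primLen z)) (f : Fin n → A) (hf : CondC F0 hn z ((i : ℕ) + ℓ) f) (m : ℕ) :
    (zGraph F0 z).Edge (mkVtx F0 hℓ hn hd i f hf m) (mkVtx F0 hℓ hn hd i f hf (m + 1))
      (periodize hn f (m : ℤ)) := by
  refine ⟨?_, ?_, ?_⟩
  · show (((i : ℕ) + (m + 1)) % primLen z) = ((((i : ℕ) + m) % primLen z) + 1) % primLen z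
    rw [Nat.mod_add_mod]
    have h1 : (i : ℕ) + (m + 1) = ((i : ℕ) + m) + 1 := by omega
    rw [h1]
  · intro k hk1
    show periodize hn f ((m : ℤ) - (ℓ : ℤ) + (((k + 1 : ℕ)) : ℤ))
        = periodize hn f ((((m + 1 : ℕ)) : ℤ) - (ℓ : ℤ) + ((k : ℕ) : ℤ))
    congr 1
    push_cast
    ring
  · intro hℓ1
    show periodize hn f ((((m + 1 : ℕ)) : ℤ) - (ℓ : ℤ) + (((ℓ - 1 : ℕ)) : ℤ))
        = periodize hn f ((m : ℕ) : ℤ)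
    congr 1
    omega

lemma mkVtx_closed (hℓ : 1 ≤ ℓ) (hn : 0 < n) (hd : 0 < d) (hdn : d ∣ n) {z : Fin d → Bool}
    (i : Fin (primLen z)) (f : Fin n → A) (hf : CondC F0 hn z ((i : ℕ) + ℓ) f) :
    mkVtx F0 hℓ hn hd i f hf n = mkVtx F0 hℓ hn hd i f hf 0 := by
  obtain ⟨hL, hLd, hper⟩ := primLen_spec hd z
  obtain ⟨c, hc⟩ := hLd.trans hdn
  apply Subtype.ext
  refine Prod.ext ?_ ?_
  · apply Fin.ext
    show ((i : ℕ) + n) % primLen z = ((i : ℕ) + 0) % primLen z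
    rw [hc, Nat.add_mul_mod_self_left, Nat.add_zero]
  · show win (periodize hn f) ((n : ℤ) - (ℓ : ℤ)) = win (periodize hn f) (((0:ℕ) : ℤ) - (ℓ : ℤ))
    apply win_congr (periodize_per hn f)
    refine ⟨1, by push_cast; ring⟩

/-- Closed walks of length `n` in `G_z` correspond to pairs (phase, admissible labels). -/
noncomputable def walkEquiv (hℓ : 1 ≤ ℓ) (hn : 0 < n) (hd : 0 < d) (hdn : d ∣ n)
    (z : Fin d → Bool) :
    {g : Fin (n + 1) → (zGraph F0 z).Vertex //
      g (Fin.last n) = g 0 ∧ ∀ k : Fin n, ∃ a, (zGraph F0 z).Edge (g k.castSucc) (g k.succ) a}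
    ≃ (Σ i : Fin (primLen z), {f : Fin n → A // CondC F0 hn z ((i : ℕ) + ℓ) f}) where
  toFun gp := ⟨(gp.1 0).1.1,
    ⟨lblW F0 hℓ gp.1, walk_cond F0 hℓ hn hd hdn gp.1 gp.2.1 gp.2.2⟩⟩
  invFun s := ⟨fun m => mkVtx F0 hℓ hn hd s.1 s.2.1 s.2.2 (m : ℕ), by
    constructor
    · exact mkVtx_closed F0 hℓ hn hd hdn s.1 s.2.1 s.2.2
    · intro k
      exact ⟨periodize hn s.2.1 ((k : ℕ) : ℤ),
        mkVtx_edge F0 hℓ hn hd s.1 s.2.1 s.2.2 (k : ℕ)⟩⟩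
  left_inv gp := by
    apply Subtype.ext
    funext m
    apply Subtype.ext
    have hG := GG_fin hn gp.1 gp.2.1 m
    rw [← hG]
    refine Prod.ext ?_ ?_
    · exact Fin.ext (GG_phase F0 hn gp.1 gp.2.1 gp.2.2 (m : ℕ)).symm
    · exact (GG_win F0 hℓ hn gp.1 gp.2.1 gp.2.2 (m : ℕ)).symm
  right_inv s := by
    obtain ⟨i, f, hf⟩ := s
    have hfst : ((mkVtx F0 hℓ hn hd i f hf (((0 : Fin (n+1))) : ℕ)).1.1) = i :=
      Fin.ext (by
        show ((i : ℕ) + ((0 : Fin (n+1)) : ℕ)) % primLen z = (i : ℕ)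
        simp [Nat.mod_eq_of_lt i.isLt])
    refine Sigma.ext hfst ?_
    rw [Subtype.heq_iff_coe_eq (fun f0 => by dsimp only; rw [hfst])]
    funext k
    have hpc := periodize_coe hn f k
    show (mkVtx F0 hℓ hn hd i f hf ((k.succ : Fin (n+1)) : ℕ)).1.2 ⟨ℓ - 1, by omega⟩ = f k
    show periodize hn f ((((k : ℕ) + 1 : ℕ) : ℤ) - (ℓ : ℤ) + (((ℓ - 1 : ℕ)) : ℤ)) = f k
    rw [← hpc]
    congr 1
    omega

omit [Fintype A] in
lemma trace_zGraph [Fintype A] (hℓ : 1 ≤ ℓ) (hn : 0 < n) (hd : 0 < d) (hdn : d ∣ n)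
    (z : Fin d → Bool) :
    Matrix.trace ((zGraph F0 z).adjMatrix ^ n)
      = ∑ i : Fin (primLen z),
          ((Nat.card {f : Fin n → A // CondC F0 hn z ((i : ℕ) + ℓ) f} : ℚ)) := by
  classical
  have hM : ∀ u v : (zGraph F0 z).Vertex,
      (zGraph F0 z).adjMatrix u v = if (∃ a, (zGraph F0 z).Edge u v a) then 1 else 0 := by
    intro u v
    unfold WBG.adjMatrix
    simp only [Matrix.of_apply]
  rw [trace_pow_eq_card (fun u v : (zGraph F0 z).Vertex => ∃ a, (zGraph F0 z).Edge u v a)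
    ((zGraph F0 z).adjMatrix) hM n]
  rw [Nat.card_congr (walkEquiv F0 hℓ hn hd hdn z), Nat.card_eq_fintype_card,
    Fintype.card_sigma]
  push_cast
  refine Finset.sum_congr rfl fun i _ => ?_
  rw [Nat.card_eq_fintype_card]

end TraceZ

end PFTproof
namespace PFTproof

section Reindex

variable {d : ℕ}

lemma sum_shift_inner (hd : 0 < d) (z : Fin d → Bool) (g : (Fin d → Bool) → ℚ) (t : ℕ) :
    ∑ i : Fin (primLen z), g (shiftW z ((i : ℕ) + t))
      = ∑ i : Fin (primLen z), g (shiftW z (i : ℕ)) := by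
  obtain ⟨hL, hLd, hper⟩ := primLen_spec hd z
  have hinj : Function.Injective
      (fun i : Fin (primLen z) => (⟨((i : ℕ) + t) % primLen z, Nat.mod_lt _ hL⟩ :
        Fin (primLen z))) := by
    intro a b hab
    have h1 : ((a : ℕ) + t) % primLen z = ((b : ℕ) + t) % primLen z :=
      congrArg Fin.val hab
    have h2 : (a : ℕ) ≡ (b : ℕ) [MOD primLen z] := Nat.ModEq.add_right_cancel' t h1
    exact Fin.ext (by
      simpa [Nat.ModEq, Nat.mod_eq_of_lt a.isLt, Nat.mod_eq_of_lt b.isLt] using h2)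
  refine Fintype.sum_bijective _ (Finite.injective_iff_bijective.1 hinj)
    (fun i => g (shiftW z ((i : ℕ) + t))) (fun i => g (shiftW z (i : ℕ))) ?_
  intro i
  show g (shiftW z ((i : ℕ) + t)) = g (shiftW z (((i : ℕ) + t) % primLen z))
  congr 1
  exact shiftW_congr hd z (Nat.mod_modEq _ _).symm

lemma nonzero_of_mem_rep {Ω : Finset (Fin d → Bool)} (hd : 0 < d) (hΩ : IsRepSet Ω)
    {z : Fin d → Bool} (hz : z ∈ Ω) (i : ℕ) : ∃ r : Fin d, shiftW z i r = true := by
  have hz0 : zAt z 0 = true := hΩ.1 z hz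
  have h6 : 0 < onesD z := by
    rw [zAt_eq hd] at hz0
    refine Finset.card_pos.2 ⟨⟨0 % d, Nat.mod_lt _ hd⟩, ?_⟩
    simp only [Finset.mem_filter, Finset.mem_univ, true_and]
    simpa using hz0
  have h5 : 0 < onesD (shiftW z i) := by rw [onesD_shiftW hd z i]; exact h6
  obtain ⟨r, hr⟩ := Finset.card_pos.1 h5
  exact ⟨r, (Finset.mem_filter.1 hr).2⟩

lemma shift_inj_aux (hd : 0 < d) (z : Fin d → Bool) {i i' : ℕ}
    (hi' : i' < primLen z) (hil : i ≤ d)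
    (h : ∀ k : ℕ, zAt z (k + i) = zAt z (k + i')) (hlt : i < i') : False := by
  have hper : ∀ m : ℕ, zAt z (m + (i' - i)) = zAt z m := by
    intro m
    have hk := h (m + d - i)
    rw [show m + d - i + i = m + d by omega] at hk
    rw [show m + d - i + i' = (m + (i' - i)) + d by omega] at hk
    rw [zAt_add_d hd, zAt_add_d hd] at hk
    exact hk.symm
  have h1 : primLen z ≤ i' - i := primLen_le_period hd z (by omega) hper
  omega

lemma sum_over_classes (hd : 0 < d) {Ω : Finset (Fin d → Bool)} (hΩ : IsRepSet Ω)
    (g : (Fin d → Bool) → ℚ) :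
    ∑ z ∈ Ω, ∑ i ∈ Finset.range (primLen z), g (shiftW z i)
      = ∑ y ∈ Finset.univ.filter (fun y : Fin d → Bool => ∃ i, y i = true), g y := by
  rw [← Finset.sum_sigma Ω (fun z => Finset.range (primLen z))
    (fun p => g (shiftW p.1 p.2))]
  refine Finset.sum_bij (fun p _ => shiftW p.1 p.2) ?_ ?_ ?_ ?_
  · rintro ⟨z, i⟩ hp
    have hz := (Finset.mem_sigma.1 hp).1
    simp only [Finset.mem_filter, Finset.mem_univ, true_and]
    exact nonzero_of_mem_rep hd hΩ hz i
  · rintro ⟨z, i⟩ hp ⟨z', i'⟩ hp' heq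
    dsimp only at heq
    have hz : z ∈ Ω := (Finset.mem_sigma.1 hp).1
    have hi : i < primLen z := Finset.mem_range.1 (Finset.mem_sigma.1 hp).2
    have hz' : z' ∈ Ω := (Finset.mem_sigma.1 hp').1
    have hi' : i' < primLen z' := Finset.mem_range.1 (Finset.mem_sigma.1 hp').2
    obtain ⟨hLz, hLdz, _⟩ := primLen_spec hd z
    obtain ⟨hLz', hLdz', _⟩ := primLen_spec hd z'
    have hLzd : primLen z ≤ d := Nat.le_of_dvd hd hLdz
    have hLzd' : primLen z' ≤ d := Nat.le_of_dvd hd hLdz'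
    have hrep : ∀ (w : Fin d → Bool) (j : ℕ), j ≤ d →
        (∃ q : ℕ, ∀ m : ℕ, zAt w m = zAt (shiftW w j) (m + q)) := by
      intro w j hj
      refine ⟨d - j, fun m => ?_⟩
      rw [zAt_shiftW hd, show m + (d - j) + j = m + d by omega, zAt_add_d hd]
    -- z = z'
    have hy : ∃ r, shiftW z i r = true := nonzero_of_mem_rep hd hΩ hz i
    obtain ⟨w, hw, huniq⟩ := hΩ.2 (shiftW z i) (by
      obtain ⟨r, hr⟩ := hy
      exact ⟨r, hr⟩)
    obtain ⟨q1, hq1⟩ := hrep z i (by omega)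
    obtain ⟨q2, hq2⟩ := hrep z' i' (by omega)
    have hzz : z = w := huniq z ⟨hz, q1, hq1⟩
    have hzz' : z' = w := huniq z' ⟨hz', q2, by rw [← heq] at hq2; exact hq2⟩
    have hzeq : z = z' := hzz.trans hzz'.symm
    subst hzeq
    -- i = i'
    have hall : ∀ k : ℕ, zAt z (k + i) = zAt z (k + i') := by
      intro k
      have e1 : zAt z (k + i) = zAt (shiftW z i) k := (zAt_shiftW hd z i k).symm
      rw [e1, heq, zAt_shiftW hd]
    rcases lt_trichotomy i i' with hlt | heqi | hgt
    · exact absurd (shift_inj_aux hd z hi' (by omega) hall hlt) (by simp)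
    · exact Sigma.ext rfl (by simp [heqi])
    · exact absurd (shift_inj_aux hd z hi (by omega) (fun k => (hall k).symm) hgt)
        (by simp)
  · intro y hy
    simp only [Finset.mem_filter, Finset.mem_univ, true_and] at hy
    obtain ⟨w, ⟨hwΩ, q, hq⟩, _⟩ := hΩ.2 y hy
    obtain ⟨hLw, hLdw, hperw⟩ := primLen_spec hd w
    set i0 : ℕ := (d - q % d) % d with hi0
    refine ⟨⟨w, i0 % primLen w⟩, Finset.mem_sigma.2 ⟨hwΩ,
      Finset.mem_range.2 (Nat.mod_lt _ hLw)⟩, ?_⟩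
    have hs1 : shiftW w (i0 % primLen w) = shiftW w i0 :=
      shiftW_congr hd w (Nat.mod_modEq _ _)
    show shiftW w (i0 % primLen w) = y
    rw [hs1]
    funext r
    show zAt w ((r : ℕ) + i0) = y r
    rw [hq ((r : ℕ) + i0)]
    have hmod : (r : ℕ) + i0 + q ≡ (r : ℕ) [MOD d] := by
      have h6 : i0 ≡ (d - q % d) [MOD d] := Nat.mod_modEq _ d
      have h7 : (r : ℕ) + i0 + q ≡ (r : ℕ) + ((d - q % d) + q) [MOD d] := by
        have := (h6.add_right q).add_left (r : ℕ)
        simpa [Nat.add_assoc] using this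
      refine h7.trans ?_
      have h8 : (d - q % d) + q = d * (1 + q / d) := by
        rw [Nat.mul_add, Nat.mul_one]
        have h5 := Nat.mod_lt q hd
        have h4 := Nat.mod_add_div q d
        omega
      rw [h8]
      have h9 : d * (1 + q / d) ≡ 0 [MOD d] := (Nat.modEq_zero_iff_dvd).2 ⟨1 + q / d, rfl⟩
      simpa using h9.add_left (r : ℕ)
    rw [zAt_congr hd y hmod, zAt_coe hd]
  · intro p hp
    rfl

end Reindex

end PFTproof
open PFTproof

/-- **Lemma (trace formula for the number of periodic points).** For a PFT
`X = X(F⁰, ℓ, T)` in standard form, `n ≥ 1`, `d = gcd(n,T)`, and `X_d = X(F⁰, ℓ, d)`: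
`|P_n(X)| = |P_n(X_d)| = Σ_{z ∈ Ω_d} (-1)^{d W_z / L_z - 1} tr(A_z^n)`,
where `d W_z / L_z = N_z W_z` is the number of `1`s in `z`. -/
theorem pft_card_periodic_eq_trace_sum {A : Type} [Fintype A] [Nonempty A] {ℓ T n : ℕ}
    (hℓ : 1 ≤ ℓ) (hT : 1 ≤ T) (hn : 1 ≤ n) (F0 : Set (Word A ℓ))
    (Ω : Finset (Fin (Nat.gcd n T) → Bool)) (hΩ : IsRepSet Ω) :
    Nat.card (pftPer F0 T n) = Nat.card (pftPer F0 (Nat.gcd n T) n) ∧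
    (Nat.card (pftPer F0 T n) : ℚ) =
      ∑ z ∈ Ω, (-1 : ℚ) ^ (primCopies z * primOnes z - 1) *
        Matrix.trace ((zGraph F0 z).adjMatrix ^ n) := by
  classical
  have hd : 0 < Nat.gcd n T := Nat.gcd_pos_of_pos_left T hn
  have hdn : Nat.gcd n T ∣ n := Nat.gcd_dvd_left n T
  have hn0 : 0 < n := hn
  have hEq := pftPer_gcd hT hn F0
  refine ⟨by rw [hEq], ?_⟩
  rw [hEq, card_pftPer_eq F0 hn0 hd, card_union_IE hd (Sr F0 hn0)]
  set g : (Fin (Nat.gcd n T) → Bool) → ℚ := fun y => (-1:ℚ) ^ (onesD y - 1) *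
    (Nat.card {f : Fin n → A //
      ∀ r : Fin (Nat.gcd n T), y r = true → Sr F0 hn0 r f} : ℚ) with hg
  refine Eq.trans (sum_over_classes hd hΩ g).symm ?_
  refine Finset.sum_congr rfl fun z hz => ?_
  have key : ∀ i : Fin (primLen z), g (shiftW z ((i : ℕ) + ℓ))
      = (-1:ℚ) ^ (primCopies z * primOnes z - 1) *
        (Nat.card {f : Fin n → A // CondC F0 hn0 z ((i : ℕ) + ℓ) f} : ℚ) := by
    intro i
    rw [hg]
    show (-1:ℚ) ^ (onesD (shiftW z ((i : ℕ) + ℓ)) - 1) * _ = _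
    rw [onesD_shiftW hd z, onesD_eq_copies_mul_ones hd z]
    congr 2
    exact Nat.card_congr (Equiv.subtypeEquivRight
      (fun f => (condC_iff hd F0 hn0 z ((i : ℕ) + ℓ) f).symm))
  calc ∑ i ∈ Finset.range (primLen z), g (shiftW z i)
      = ∑ i : Fin (primLen z), g (shiftW z (i : ℕ)) :=
        (Fin.sum_univ_eq_sum_range (fun i => g (shiftW z i)) _).symm
    _ = ∑ i : Fin (primLen z), g (shiftW z ((i : ℕ) + ℓ)) :=
        (sum_shift_inner hd z g ℓ).symm
    _ = ∑ i : Fin (primLen z), (-1:ℚ) ^ (primCopies z * primOnes z - 1) *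
          (Nat.card {f : Fin n → A // CondC F0 hn0 z ((i : ℕ) + ℓ) f} : ℚ) :=
        Finset.sum_congr rfl fun i _ => key i
    _ = (-1:ℚ) ^ (primCopies z * primOnes z - 1) *
          ∑ i : Fin (primLen z),
            (Nat.card {f : Fin n → A // CondC F0 hn0 z ((i : ℕ) + ℓ) f} : ℚ) :=
        (Finset.mul_sum _ _ _).symm
    _ = (-1:ℚ) ^ (primCopies z * primOnes z - 1) *
          Matrix.trace ((zGraph F0 z).adjMatrix ^ n) := by
        rw [trace_zGraph F0 hℓ hn0 hd hdn z]
end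

section
/- Let X = X(F⁰, ℓ, T) be a PFT in standard form over a finite alphabet Σ, let n ≥ 1 be an integer, let d = gcd(n, T), and let X_d = X(F⁰, ℓ, d) be the PFT with the same forbidden set F⁰ and period d. Then for every bi-infinite sequence x over Σ, x ∈ P_n(X) if and only if x ∈ P_n(X_d). -/
open scoped BigOperators

/-- **Proposition.** For a PFT `X = X(F⁰, ℓ, T)` in standard form, `n ≥ 1`, `d = gcd(n,T)`,
and the PFT `X_d = X(F⁰, ℓ, d)` with the same forbidden set and period `d`:
a bi-infinite sequence lies in `P_n(X)` iff it lies in `P_n(X_d)`. -/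
theorem pft_periodic_mem_iff_gcd_period {A : Type} [Fintype A] [Nonempty A] {ℓ T n : ℕ}
    (hℓ : 1 ≤ ℓ) (hT : 1 ≤ T) (hn : 1 ≤ n) (F0 : Set (Word A ℓ)) (x : ℤ → A) :
    x ∈ pftPer F0 T n ↔ x ∈ pftPer F0 (Nat.gcd n T) n := by
  set d := Nat.gcd n T with hdef
  have hdpos : 0 < d := Nat.gcd_pos_of_pos_left _ hn
  have hdT : d ∣ T := Nat.gcd_dvd_right n T
  constructor
  · rintro ⟨⟨r, hr, hF⟩, hx⟩
    have hper : ∀ (m i : ℤ), x (i + m * n) = x i := by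
      intro m
      induction m using Int.induction_on with
      | zero => intro i; simp
      | succ m ih =>
          intro i
          have h1 : i + ((m : ℤ) + 1) * n = (i + m * n) + n := by ring
          rw [h1, hx, ih]
      | pred m ih =>
          intro i
          have h1 : i + (-(m : ℤ) - 1) * n = (i + -(m : ℤ) * n - n) := by ring
          have h2 := hx (i + -(m : ℤ) * n - n)
          rw [sub_add_cancel] at h2
          rw [h1, ← h2, ih]
    have hgood : ∀ (m j : ℤ),
        ((fun k : Fin ℓ => x (j + m * n + (k : ℕ))) ∈ F0 ↔
         (fun k : Fin ℓ => x (j + (k : ℕ))) ∈ F0) := by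
      intro m j
      have he : (fun k : Fin ℓ => x (j + m * n + (k : ℕ))) =
          fun k : Fin ℓ => x (j + (k : ℕ)) := by
        funext k
        have := hper m (j + (k : ℕ))
        rw [← this]; ring_nf
      rw [he]
    refine ⟨⟨r % d, Nat.mod_lt _ hdpos, ?_⟩, hx⟩
    intro i hi
    have hrc : ((r % d : ℕ) : ℤ) = (r : ℤ) % d := by push_cast; ring
    have hdvd1 : (d : ℤ) ∣ ((r : ℤ) % d - r) := by
      rw [Int.emod_def]
      exact ⟨-((r : ℤ) / d), by ring⟩
    have hdvdc : (d : ℤ) ∣ (i + ((r % d : ℕ) : ℤ) - r) := by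
      rw [hrc]
      have : i + (r : ℤ) % d - r = i + ((r : ℤ) % d - r) := by ring
      rw [this]
      exact dvd_add hi hdvd1
    obtain ⟨e, he⟩ := hdvdc
    have hbez : (d : ℤ) = n * Nat.gcdA n T + T * Nat.gcdB n T := Nat.gcd_eq_gcd_ab n T
    set a := Nat.gcdA n T
    set b := Nat.gcdB n T
    have hj : (T : ℤ) ∣ (T * (b * e)) := ⟨b * e, rfl⟩
    have hgoodj := hF (T * (b * e)) hj
    have hie : i + ((r % d : ℕ) : ℤ) = (T * (b * e) + r) + (a * e) * n := by
      have : i + ((r % d : ℕ) : ℤ) = r + (d : ℤ) * e := by linarith [he]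
      rw [this, hbez]; ring
    intro hmem
    apply hgoodj
    have := (hgood (a * e) (T * (b * e) + (r : ℤ))).mp
    apply this
    rw [← hie]
    exact hmem
  · rintro ⟨⟨r, hr, hF⟩, hx⟩
    refine ⟨⟨r, lt_of_lt_of_le hr (Nat.le_of_dvd hT hdT), ?_⟩, hx⟩
    intro i hi
    exact hF i (dvd_trans (Int.natCast_dvd_natCast.mpr hdT) hi)
end

section
/- Let X = X(F⁰, ℓ, T) be a PFT in standard form over a finite alphabet Σ, let n ≥ 1 be an integer, let d = gcd(n, T), let X_d = X(F⁰, ℓ, d) be the PFT with the same forbidden set F⁰ and period d, and let G_{X_d} be the MS presentation of X_d. Then |P_n(X)| = |P_n(X_d)| = Σ_{w ∈ Σ^ℓ} | ⋃_{i=0}^{d−1} C_n(w^(i))_{G_{X_d}} |. -/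
open scoped BigOperators

section Aux
variable {A : Type}

lemma per_dvd {x : ℤ → A} {n : ℕ} (hx : ∀ i : ℤ, x (i + (n:ℤ)) = x i)
    {p q : ℤ} (h : (n:ℤ) ∣ (p - q)) : x p = x q := by
  have key : ∀ (c : ℕ) (j : ℤ), x (j + (c:ℤ) * n) = x j := by
    intro c
    induction c with
    | zero => simp
    | succ m ih =>
        intro j
        have h1 : ((m+1 : ℕ):ℤ) = (m:ℤ) + 1 := by push_cast; ring
        have h2 : j + ((m:ℤ) + 1) * n = (j + (m:ℤ) * n) + n := by ring
        rw [h1, h2, hx, ih]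
  obtain ⟨c, hc⟩ := h
  rcases le_or_gt 0 c with h0 | h0
  · have hthis := key c.toNat q
    rw [Int.toNat_of_nonneg h0] at hthis
    rw [← hthis]
    congr 1
    linear_combination hc
  · have hthis := key (-c).toNat p
    rw [Int.toNat_of_nonneg (by omega)] at hthis
    have hq : q = p + (-c) * (n:ℤ) := by linear_combination -hc
    rw [hq, hthis]

lemma periodize_apply_eq {n : ℕ} (hn : 0 < n) (f : Fin n → A) {j : ℤ} {m : ℕ} (hm : m < n)
    (h : (n:ℤ) ∣ (j - (m:ℤ))) : periodize hn f j = f ⟨m, hm⟩ := by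
  have h1 : 0 ≤ j % (n:ℤ) := Int.emod_nonneg j (by exact_mod_cast hn.ne')
  have h2 : j % (n : ℤ) < (n : ℤ) := Int.emod_lt_of_pos j (by exact_mod_cast hn)
  have h3 : j % (n:ℤ) = (m:ℤ) := by
    have h4 : ((m:ℤ)) % n = (m:ℤ) := Int.emod_eq_of_lt (by positivity) (by exact_mod_cast hm)
    have h5 : j % (n:ℤ) = (m:ℤ) % n :=
      Int.emod_eq_emod_iff_emod_sub_eq_zero.mpr (Int.emod_eq_zero_of_dvd h)
    rw [h5, h4]
  have h6 : (j % (n:ℤ)).toNat = m := by omega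
  unfold periodize
  simp only [h6]

lemma periodize_per {n : ℕ} (hn : 0 < n) (f : Fin n → A) :
    ∀ i : ℤ, periodize hn f (i + (n:ℤ)) = periodize hn f i := by
  intro i
  have h1 : 0 ≤ i % (n:ℤ) := Int.emod_nonneg i (by exact_mod_cast hn.ne')
  have h2 : i % (n : ℤ) < (n : ℤ) := Int.emod_lt_of_pos i (by exact_mod_cast hn)
  have hm : ((i % (n:ℤ)).toNat) < n := by omega
  have hd : (n:ℤ) ∣ (i - ((i % (n:ℤ)).toNat : ℤ)) := by
    refine ⟨i / n, ?_⟩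
    have h3 := Int.emod_add_mul_ediv i (n:ℤ)
    have h4 : (((i % (n:ℤ)).toNat : ℤ)) = i % n := Int.toNat_of_nonneg h1
    rw [h4]; linarith
  have hd2 : (n:ℤ) ∣ (i + n - ((i % (n:ℤ)).toNat : ℤ)) := by
    obtain ⟨c, hc⟩ := hd; exact ⟨c + 1, by linarith⟩
  rw [periodize_apply_eq hn f hm hd2, periodize_apply_eq hn f hm hd]

lemma mod_key {d : ℕ} (hd : 0 < d) (a : ℕ) : (a + (d - a % d) % d) % d = 0 := by
  rcases Nat.eq_zero_or_pos (a % d) with h | h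
  · rw [h, Nat.sub_zero, Nat.mod_self, Nat.add_zero, h]
  · have hlt := Nat.mod_lt a hd
    have h2 : d - a % d < d := by omega
    rw [Nat.mod_eq_of_lt h2, ← Nat.mod_add_mod]
    rw [show a % d + (d - a % d) = d by omega, Nat.mod_self]

end Aux
section Paths
variable {A : Type} {ℓ T n : ℕ} {G : WBG A ℓ T}

lemma path_word_formula (p : G.Path n) :
    ∀ (k : ℕ) (hk : k ≤ n) (j : ℕ) (hj : j < ℓ),
      (p.vtx ⟨k, by omega⟩).1.2 ⟨j, hj⟩ =
        if h : j + k < ℓ then (p.vtx 0).1.2 ⟨j + k, h⟩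
        else p.lbl ⟨j + k - ℓ, by omega⟩ := by
  intro k
  induction k with
  | zero =>
      intro hk j hj
      rw [dif_pos (by omega)]
      rfl
  | succ m ih =>
      intro hk j hj
      have hm : m < n := by omega
      obtain ⟨e1, e2, e3⟩ := p.adj ⟨m, hm⟩
      simp only [Fin.succ_mk, Fin.castSucc_mk] at e2 e3
      rcases lt_or_ge (j+1) ℓ with hj1 | hj1
      · have h2 := e2 j hj1
        rw [← h2, ih (by omega) (j+1) hj1]
        have harith : j + 1 + m = j + (m+1) := by omega
        simp only [harith]
      · have hj' : j = ℓ - 1 := by omega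
        subst hj'
        rw [e3 hj, dif_neg (by omega)]
        have harith : ℓ - 1 + (m + 1) - ℓ = m := by omega
        simp only [harith]


lemma path_phase_formula (hT : 0 < T) (p : G.Path n) :
    ∀ (k : ℕ) (hk : k ≤ n),
      ((p.vtx ⟨k, by omega⟩).1.1 : ℕ) = (((p.vtx 0).1.1 : ℕ) + k) % T := by
  intro k
  induction k with
  | zero =>
      intro hk
      show ((p.vtx 0).1.1 : ℕ) = _
      simp [Nat.mod_eq_of_lt ((p.vtx 0).1.1.is_lt)]
  | succ m ih =>
      intro hk
      have hm : m < n := by omega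
      have e1 := (p.adj ⟨m, hm⟩).1
      simp only [Fin.succ_mk, Fin.castSucc_mk] at e1
      rw [e1, ih (by omega), Nat.mod_add_mod, Nat.add_assoc]

lemma cnset_analysis {A : Type} {ℓ d n : ℕ} (hℓ : 1 ≤ ℓ) (hd : 0 < d) (hdn : d ∣ n)
    (F0 : Set (Word A ℓ)) (i : Fin d) (w : Word A ℓ) (x : ℤ → A)
    (hx : x ∈ (msGraph F0 d).CnSet i w n) :
    (∀ j : ℤ, x (j + (n:ℤ)) = x j) ∧ (w = fun j : Fin ℓ => x (((j:ℕ):ℤ) - (ℓ:ℤ))) ∧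
    x ∈ pftSF F0 d := by
  obtain ⟨p, hn, h0, hlast, hxeq⟩ := hx
  subst hxeq
  set x := periodize hn p.lbl with hxdef
  have hper : ∀ j : ℤ, x (j + (n:ℤ)) = x j := periodize_per hn p.lbl
  have h01 : (p.vtx 0).1.1 = i := by rw [h0]
  have h02 : (p.vtx 0).1.2 = w := by rw [h0]
  have hxm : ∀ (m : ℕ) (hm : m < n), x ((m:ℤ)) = p.lbl ⟨m, hm⟩ := by
    intro m hm
    exact periodize_apply_eq hn p.lbl hm (by simp)
  -- Step A : the start word is determined by x
  have hw : ∀ (j : ℕ) (hj : j < ℓ), w ⟨j, hj⟩ = x ((j:ℤ) - (ℓ:ℤ)) := by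
    have key : ∀ (M : ℕ) (j : ℕ) (hj : j < ℓ), ℓ - j ≤ M → w ⟨j, hj⟩ = x ((j:ℤ) - (ℓ:ℤ)) := by
      intro M
      induction M with
      | zero => intro j hj hle; omega
      | succ M ih =>
          intro j hj hle
          have hend := path_word_formula p n le_rfl j hj
          have hlast2 : (p.vtx ⟨n, by omega⟩).1.2 = w := by
            rw [show (⟨n, by omega⟩ : Fin (n+1)) = Fin.last n from rfl, hlast]
          rw [hlast2, h02] at hend
          rcases lt_or_ge (j + n) ℓ with hc | hc
          · rw [dif_pos hc] at hend
            rw [hend, ih (j+n) hc (by omega)]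
            apply per_dvd hper
            refine ⟨1, by omega⟩
          · rw [dif_neg (by omega)] at hend
            have hlt : j + n - ℓ < n := by omega
            rw [hend, ← hxm (j + n - ℓ) hlt]
            apply per_dvd hper
            refine ⟨1, by omega⟩
    intro j hj
    exact key ℓ j hj (by omega)
  -- Step B : the word at each vertex of the path
  have hwk : ∀ (k : ℕ) (hk : k ≤ n) (j : ℕ) (hj : j < ℓ),
      (p.vtx ⟨k, by omega⟩).1.2 ⟨j, hj⟩ = x ((j:ℤ) + (k:ℤ) - (ℓ:ℤ)) := by
    intro k hk j hj
    rw [path_word_formula p k hk j hj]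
    rcases lt_or_ge (j + k) ℓ with hc | hc
    · rw [dif_pos hc, h02, hw (j+k) hc]
      congr 1 <;> omega
    · rw [dif_neg (by omega)]
      have hlt : j + k - ℓ < n := by omega
      rw [← hxm (j + k - ℓ) hlt]
      congr 1 <;> omega
  refine ⟨hper, ?_, ?_⟩
  · funext j
    have := hw j.1 j.2
    simpa using this
  · -- pftSF membership
    set r : ℕ := (d - ((i:ℕ) + ℓ) % d) % d with hrdef
    have hkey : (((i:ℕ) + ℓ) + r) % d = 0 := mod_key hd _
    refine ⟨r, Nat.mod_lt _ hd, ?_⟩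
    intro i' hi'
    set pI : ℤ := i' + (r:ℤ) with hpdef
    set k0 : ℕ := ((pI + (ℓ:ℤ)) % (n:ℤ)).toNat with hk0def
    have hb1 : 0 ≤ (pI + (ℓ:ℤ)) % (n:ℤ) := Int.emod_nonneg _ (by exact_mod_cast hn.ne')
    have hb2 : (pI + (ℓ:ℤ)) % (n:ℤ) < (n:ℤ) := Int.emod_lt_of_pos _ (by exact_mod_cast hn)
    have hk0n : k0 < n := by omega
    have hndvd : (n:ℤ) ∣ (pI + (ℓ:ℤ) - (k0:ℤ)) := by
      refine ⟨(pI + (ℓ:ℤ)) / n, ?_⟩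
      have h3 := Int.emod_add_mul_ediv (pI + (ℓ:ℤ)) (n:ℤ)
      have h4 : ((k0:ℤ)) = (pI + (ℓ:ℤ)) % n := by
        rw [hk0def, Int.toNat_of_nonneg hb1]
      rw [h4]; linarith
    have hddvdn : (d:ℤ) ∣ (n:ℤ) := Int.natCast_dvd_natCast.mpr hdn
    have hdkey : (d:ℤ) ∣ (((i:ℕ):ℤ) + (ℓ:ℤ) + (r:ℤ)) := by
      have h6 := Nat.dvd_of_mod_eq_zero hkey
      have h5 : (d:ℤ) ∣ ((((i:ℕ) + ℓ + r : ℕ)):ℤ) := Int.natCast_dvd_natCast.mpr h6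
      push_cast at h5
      exact h5
    have hri : (d:ℤ) ∣ (pI - (r:ℤ)) := by rw [hpdef]; simpa using hi'
    have hphase : (d:ℤ) ∣ (((i:ℕ):ℤ) + (k0:ℤ)) := by
      obtain ⟨a, ha⟩ := hdkey
      obtain ⟨b, hb⟩ := hri
      obtain ⟨c1, hc1⟩ := hndvd
      obtain ⟨e, he⟩ := hdn
      have he' : (n:ℤ) = (d:ℤ) * (e:ℤ) := by exact_mod_cast he
      refine ⟨a + b - (e:ℤ) * c1, ?_⟩
      linear_combination ha + hb - hc1 - c1 * he'
    have hph0 : ((p.vtx ⟨k0, by omega⟩).1.1 : ℕ) = 0 := by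
      rw [path_phase_formula hd p k0 (le_of_lt hk0n), h01]
      have h7 : d ∣ ((i:ℕ) + k0) := by exact_mod_cast hphase
      exact Nat.eq_zero_of_dvd_of_lt h7 |> fun _ => Nat.mod_eq_zero_of_dvd h7
    have hmem := (p.vtx ⟨k0, by omega⟩).2
    simp only [msGraph] at hmem
    rw [if_pos hph0] at hmem
    have hfun : (fun k : Fin ℓ => x (i' + (r:ℤ) + ((k:ℕ):ℤ))) = (p.vtx ⟨k0, by omega⟩).1.2 := by
      funext j
      have h7 := hwk k0 (le_of_lt hk0n) j.1 j.2
      simp only [Fin.eta] at h7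
      rw [h7]
      apply per_dvd hper
      obtain ⟨c1, hc1⟩ := hndvd
      exact ⟨c1, by linear_combination hc1⟩
    rw [hfun]
    exact hmem

lemma mem_cnset_of_per {A : Type} {ℓ d n : ℕ} (hℓ : 1 ≤ ℓ) (hd : 0 < d) (hdn : d ∣ n)
    (hn : 0 < n) (F0 : Set (Word A ℓ)) (x : ℤ → A) (hx : x ∈ pftPer F0 d n) :
    ∃ i : Fin d, x ∈ (msGraph F0 d).CnSet i (fun j : Fin ℓ => x (((j:ℕ):ℤ) - (ℓ:ℤ))) n := by
  obtain ⟨⟨r, hr, hav⟩, hper⟩ := hx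
  set i0 : ℕ := (d - (r + ℓ) % d) % d with hi0def
  have hkey : ((r + ℓ) + i0) % d = 0 := mod_key hd _
  have hi0 : i0 < d := Nat.mod_lt _ hd
  have hdkey : (d:ℤ) ∣ ((r:ℤ) + (ℓ:ℤ) + (i0:ℤ)) := by
    have h6 := Nat.dvd_of_mod_eq_zero hkey
    have h5 : (d:ℤ) ∣ (((r + ℓ + i0 : ℕ)):ℤ) := Int.natCast_dvd_natCast.mpr h6
    push_cast at h5
    exact h5
  have hmem : ∀ k : ℕ,
      (fun j : Fin ℓ => x ((k:ℤ) - (ℓ:ℤ) + ((j:ℕ):ℤ))) ∈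
        (msGraph F0 d).V ⟨(i0 + k) % d, Nat.mod_lt _ hd⟩ := by
    intro k
    by_cases h : (i0 + k) % d = 0
    · simp only [msGraph, h, if_pos rfl, Set.mem_setOf_eq]
      have hik : (d:ℤ) ∣ ((i0:ℤ) + (k:ℤ)) := by
        have h7 : d ∣ (i0 + k) := Nat.dvd_of_mod_eq_zero h
        exact_mod_cast Int.natCast_dvd_natCast.mpr h7
      have hdvd : (d:ℤ) ∣ ((k:ℤ) - (ℓ:ℤ) - (r:ℤ)) := by
        obtain ⟨a, ha⟩ := hik
        obtain ⟨b, hb⟩ := hdkey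
        exact ⟨a - b, by linear_combination ha - hb⟩
      have := hav ((k:ℤ) - (ℓ:ℤ) - (r:ℤ)) hdvd
      convert this using 2
      funext j
      congr 1
      ring
    · simp [msGraph, h]
  refine ⟨⟨i0, hi0⟩, ?_⟩
  refine ⟨⟨fun k => ⟨(⟨(i0 + (k:ℕ)) % d, Nat.mod_lt _ hd⟩,
      fun j : Fin ℓ => x (((k:ℕ):ℤ) - (ℓ:ℤ) + ((j:ℕ):ℤ))), hmem (k:ℕ)⟩,
    fun k => x ((k:ℕ):ℤ), ?_⟩, hn, ?_, ?_, ?_⟩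
  · -- adjacency
    intro k
    refine ⟨?_, ?_, ?_⟩
    · show ((i0 + ((k.succ : Fin (n+1)):ℕ)) % d) = ((i0 + ((k.castSucc : Fin (n+1)):ℕ)) % d + 1) % d
      rw [Fin.val_succ, show ((k.castSucc : Fin (n+1)):ℕ) = (k:ℕ) from rfl]
      conv_rhs => rw [Nat.mod_add_mod]
      congr 1 <;> omega
    · intro j hj
      simp only [Fin.coe_castSucc, Fin.val_succ]
      congr 1
      push_cast
      ring
    · intro h
      simp only [Fin.val_succ]
      congr 1
      omega
  · -- start vertex
    have h1 : (i0 + ((0 : Fin (n+1)):ℕ)) % d = i0 := by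
      simp [Nat.mod_eq_of_lt hi0]
    refine Prod.ext ?_ ?_
    · exact Fin.ext (by simpa using h1)
    · show (fun j : Fin ℓ => x ((((0 : Fin (n+1)):ℕ):ℤ) - (ℓ:ℤ) + ((j:ℕ):ℤ))) = _
      funext j
      simp only [Fin.val_zero]
      congr 1
      push_cast
      ring
  · -- end vertex
    obtain ⟨e, he⟩ := hdn
    refine Prod.ext ?_ ?_
    · refine Fin.ext ?_
      show (i0 + ((Fin.last n : Fin (n+1)):ℕ)) % d = i0
      simp only [Fin.val_last]
      rw [he, Nat.add_mul_mod_self_left, Nat.mod_eq_of_lt hi0]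
    · show (fun j : Fin ℓ => x ((((Fin.last n):ℕ):ℤ) - (ℓ:ℤ) + ((j:ℕ):ℤ))) = _
      funext j
      simp only [Fin.val_last]
      apply per_dvd hper
      refine ⟨1, by ring⟩
  · -- x = periodize
    funext j
    have hb1 : 0 ≤ j % (n:ℤ) := Int.emod_nonneg _ (by exact_mod_cast hn.ne')
    have hb2 : j % (n:ℤ) < (n:ℤ) := Int.emod_lt_of_pos _ (by exact_mod_cast hn)
    have hm : (j % (n:ℤ)).toNat < n := by omega
    have hdvd : (n:ℤ) ∣ (j - ((j % (n:ℤ)).toNat : ℤ)) := by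
      refine ⟨j / n, ?_⟩
      have h3 := Int.emod_add_mul_ediv j (n:ℤ)
      have h4 : (((j % (n:ℤ)).toNat : ℤ)) = j % n := Int.toNat_of_nonneg hb1
      rw [h4]; linarith
    rw [periodize_apply_eq hn _ hm hdvd]
    exact per_dvd hper hdvd

lemma pftPer_gcd_eq {A : Type} {ℓ T n : ℕ} (hT : 0 < T) (hn : 0 < n)
    (F0 : Set (Word A ℓ)) : pftPer F0 T n = pftPer F0 (Nat.gcd n T) n := by
  set d := Nat.gcd n T with hddef
  have hd : 0 < d := Nat.gcd_pos_of_pos_right _ hT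
  ext x
  simp only [pftPer, pftSF, Set.mem_setOf_eq]
  constructor
  · rintro ⟨⟨r, hrT, hav⟩, hper⟩
    refine ⟨⟨r % d, Nat.mod_lt _ hd, ?_⟩, hper⟩
    intro i' hi'
    have hδ : (d:ℤ) ∣ (i' + ((r % d : ℕ):ℤ) - (r:ℤ)) := by
      have h2 : (d:ℤ) ∣ ((r:ℤ) - ((r % d : ℕ):ℤ)) := by
        refine ⟨((r / d : ℕ):ℤ), ?_⟩
        have h3 := Nat.mod_add_div r d
        push_cast
        push_cast at h3
        linarith
      obtain ⟨a, ha⟩ := hi'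
      obtain ⟨b, hb⟩ := h2
      exact ⟨a - b, by linear_combination ha - hb⟩
    obtain ⟨c, hc⟩ := hδ
    have hbez : (d:ℤ) = (n:ℤ) * Int.gcdA n T + (T:ℤ) * Int.gcdB n T := by
      have hg := Int.gcd_eq_gcd_ab (n:ℤ) (T:ℤ)
      rw [Int.gcd_natCast_natCast] at hg
      exact_mod_cast hg
    have hwin : (fun k : Fin ℓ => x (i' + ((r % d : ℕ):ℤ) + ((k:ℕ):ℤ))) =
        (fun k : Fin ℓ => x ((T:ℤ) * (Int.gcdB n T * c) + (r:ℤ) + ((k:ℕ):ℤ))) := by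
      funext j
      apply per_dvd hper
      refine ⟨Int.gcdA n T * c, ?_⟩
      linear_combination hc + c * hbez
    rw [hwin]
    exact hav _ ⟨_, rfl⟩
  · rintro ⟨⟨r, hrd, hav⟩, hper⟩
    have hdT : d ∣ T := Nat.gcd_dvd_right n T
    refine ⟨⟨r, lt_of_lt_of_le hrd (Nat.le_of_dvd hT hdT), ?_⟩, hper⟩
    intro i hi
    exact hav i (dvd_trans (Int.natCast_dvd_natCast.mpr hdT) hi)

lemma periodic_finite {A : Type} [Finite A] (n : ℕ) (hn : 0 < n) :
    ({x : ℤ → A | ∀ i : ℤ, x (i + (n:ℤ)) = x i}).Finite := by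
  rw [← Set.finite_coe_iff]
  apply Finite.of_injective
    (fun x : {x : ℤ → A | ∀ i : ℤ, x (i + (n:ℤ)) = x i} => fun k : Fin n => x.1 ((k:ℕ):ℤ))
  intro x y h
  apply Subtype.ext
  funext j
  have hb1 : 0 ≤ j % (n:ℤ) := Int.emod_nonneg _ (by exact_mod_cast hn.ne')
  have hb2 : j % (n:ℤ) < (n:ℤ) := Int.emod_lt_of_pos _ (by exact_mod_cast hn)
  have hm : (j % (n:ℤ)).toNat < n := by omega
  have hdvd : (n:ℤ) ∣ (j - ((j % (n:ℤ)).toNat : ℤ)) := by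
    refine ⟨j / n, ?_⟩
    have h3 := Int.emod_add_mul_ediv j (n:ℤ)
    have h4 : (((j % (n:ℤ)).toNat : ℤ)) = j % n := Int.toNat_of_nonneg hb1
    rw [h4]; linarith
  have hx := per_dvd x.2 hdvd
  have hy := per_dvd y.2 hdvd
  rw [hx, hy]
  exact congrFun h ⟨(j % (n:ℤ)).toNat, hm⟩

lemma card_eq_sum_aux {α ι : Type} [Fintype ι] (S : Set α) (U : ι → Set α)
    (W : α → ι) (hUsub : ∀ w, U w ⊆ S) (hUW : ∀ w x, x ∈ U w → W x = w)
    (hSU : ∀ x ∈ S, x ∈ U (W x)) (hSfin : S.Finite) :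
    Nat.card S = ∑ w : ι, Nat.card (U w) := by
  classical
  have hUfin : ∀ w, (U w).Finite := fun w => hSfin.subset (hUsub w)
  have hbiU : hSfin.toFinset = Finset.univ.biUnion (fun w => (hUfin w).toFinset) := by
    ext x
    simp only [Set.Finite.mem_toFinset, Finset.mem_biUnion, Finset.mem_univ, true_and]
    constructor
    · intro hx
      exact ⟨W x, hSU x hx⟩
    · rintro ⟨w, hw⟩
      exact hUsub w hw
  rw [Nat.card_coe_set_eq, Set.ncard_eq_toFinset_card _ hSfin, hbiU, Finset.card_biUnion]
  · apply Finset.sum_congr rfl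
    intro w _
    rw [Nat.card_coe_set_eq, Set.ncard_eq_toFinset_card _ (hUfin w)]
  · intro w _ w' _ hww
    rw [Function.onFun, Finset.disjoint_left]
    intro a ha ha'
    exact hww (((hUW w a ((hUfin w).mem_toFinset.mp ha)).symm).trans
      (hUW w' a ((hUfin w').mem_toFinset.mp ha')))

end Paths

/-- **Corollary.** For a PFT `X = X(F⁰, ℓ, T)` in standard form, `n ≥ 1`, `d = gcd(n,T)`,
the PFT `X_d = X(F⁰, ℓ, d)`, and the MS presentation `G_{X_d}` of `X_d`:
`|P_n(X)| = |P_n(X_d)| = Σ_{w ∈ Σ^ℓ} |⋃_{i=0}^{d-1} C_n(w^(i))_{G_{X_d}}|`. -/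
theorem pft_card_periodic_eq_sum_card_union {A : Type} [Fintype A] [Nonempty A] {ℓ T n : ℕ}
    (hℓ : 1 ≤ ℓ) (hT : 1 ≤ T) (hn : 1 ≤ n) (F0 : Set (Word A ℓ)) :
    Nat.card (pftPer F0 T n) = Nat.card (pftPer F0 (Nat.gcd n T) n) ∧
    Nat.card (pftPer F0 T n) =
      ∑ w : Word A ℓ,
        Nat.card (⋃ i : Fin (Nat.gcd n T), (msGraph F0 (Nat.gcd n T)).CnSet i w n) := by
  have hd : 0 < Nat.gcd n T := Nat.gcd_pos_of_pos_right _ hT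
  have hdn : Nat.gcd n T ∣ n := Nat.gcd_dvd_left n T
  have hgcd := pftPer_gcd_eq hT hn F0
  refine ⟨by rw [hgcd], ?_⟩
  rw [hgcd]
  set d := Nat.gcd n T with hddef
  exact card_eq_sum_aux (pftPer F0 d n)
    (fun w => ⋃ i : Fin d, (msGraph F0 d).CnSet i w n)
    (fun x => fun j : Fin ℓ => x (((j:ℕ):ℤ) - (ℓ:ℤ)))
    (by
      intro w x hx
      simp only [Set.mem_iUnion] at hx
      obtain ⟨i, hi⟩ := hx
      obtain ⟨hper, hweq, hsf⟩ := cnset_analysis hℓ hd hdn F0 i w x hi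
      exact ⟨hsf, hper⟩)
    (by
      intro w x hx
      simp only [Set.mem_iUnion] at hx
      obtain ⟨i, hi⟩ := hx
      obtain ⟨hper, hweq, hsf⟩ := cnset_analysis hℓ hd hdn F0 i w x hi
      exact hweq.symm)
    (by
      intro x hx
      obtain ⟨i, hi⟩ := mem_cnset_of_per hℓ hd hdn hn F0 x hx
      exact Set.mem_iUnion.mpr ⟨i, hi⟩)
    ((periodic_finite (A := A) n hn).subset (fun x hx => hx.2))
end

section
/- Let G be a WBG over a finite alphabet Σ with word length ℓ, and let C and C̃ be cycles in G of the same positive length, based at vertices u^(i) and v^(j) respectively, where u, v ∈ Σ^ℓ. If the label sequences of C and C̃ are equal, then u = v (i.e., both base vertices correspond to the same word in Σ^ℓ). -/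
open scoped BigOperators

set_option maxHeartbeats 1000000 in
theorem wbg_aux_shift {A : Type} {ℓ T : ℕ} (G : WBG A ℓ T) {n : ℕ} (p : G.Path n) :
    ∀ (j s k : ℕ) (h1 : s + j ≤ n) (h2 : k + j < ℓ),
      (p.vtx ⟨s + j, by omega⟩).1.2 ⟨k, by omega⟩ = (p.vtx ⟨s, by omega⟩).1.2 ⟨k + j, h2⟩ := by
  intro j
  induction j with
  | zero => intro s k h1 h2; rfl
  | succ j ih =>
    intro s k h1 h2
    have step := (p.adj ⟨s + j, by omega⟩).2.1 k (by omega)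
    have e1 : (⟨s + j, by omega⟩ : Fin n).castSucc = (⟨s + j, by omega⟩ : Fin (n+1)) := rfl
    have e2 : (⟨s + j, by omega⟩ : Fin n).succ = (⟨s + (j+1), by omega⟩ : Fin (n+1)) := by
      ext; simp [Fin.succ]; omega
    rw [e1, e2] at step
    rw [← step]
    have := ih s (k + 1) (by omega) (by omega)
    rw [this]
    have e4 : (⟨k + 1 + j, by omega⟩ : Fin ℓ) = ⟨k + (j + 1), h2⟩ := by
      simp only [Fin.mk.injEq]; omega
    rw [e4]

theorem wbg_aux_lbl {A : Type} {ℓ T : ℕ} (hℓ : 1 ≤ ℓ) (G : WBG A ℓ T) {n : ℕ} (p : G.Path n)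
    (s : ℕ) (hs : s < n) :
    (p.vtx ⟨s + 1, by omega⟩).1.2 ⟨ℓ - 1, by omega⟩ = p.lbl ⟨s, hs⟩ := by
  have step := (p.adj ⟨s, hs⟩).2.2 (by omega)
  have e2 : (⟨s, hs⟩ : Fin n).succ = (⟨s + 1, by omega⟩ : Fin (n+1)) := rfl
  rw [e2] at step
  exact step

theorem wbg_cycle_word {A : Type} {ℓ T : ℕ} (hℓ : 1 ≤ ℓ) (G : WBG A ℓ T) {n : ℕ} (hn : 0 < n)
    (p : G.Path n) (hcyc : p.vtx (Fin.last n) = p.vtx 0) :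
    ∀ d : ℕ, d < ℓ →
      (p.vtx 0).1.2 ⟨ℓ - 1 - d, by omega⟩ = p.lbl ⟨n - 1 - d % n, by omega⟩ := by
  intro d
  induction d using Nat.strong_induction_on with
  | _ d ih =>
    intro hd
    by_cases hdn : d < n
    · have h1 := wbg_aux_shift G p d (n - d) (ℓ - 1 - d) (by omega) (by omega)
      have e1 : (⟨n - d + d, by omega⟩ : Fin (n+1)) = Fin.last n := by ext; simp; omega
      rw [e1, hcyc] at h1
      rw [h1]
      rcases Nat.exists_eq_add_of_lt hdn with ⟨c, hc⟩
      have h2 := wbg_aux_lbl hℓ G p (n - d - 1) (by omega)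
      have e2 : (⟨n - d - 1 + 1, by omega⟩ : Fin (n+1)) = (⟨n - d, by omega⟩ : Fin (n+1)) := by
        ext; simp; omega
      rw [e2] at h2
      have e3 : (⟨ℓ - 1 - d + d, by omega⟩ : Fin ℓ) = (⟨ℓ - 1, by omega⟩ : Fin ℓ) := by
        ext; simp; omega
      rw [e3, h2]
      have e5 : (⟨n - d - 1, by omega⟩ : Fin n) = ⟨n - 1 - d % n, by omega⟩ := by
        simp only [Fin.mk.injEq, Nat.mod_eq_of_lt hdn]; omega
      rw [e5]
    · push_neg at hdn
      have h1 := wbg_aux_shift G p n 0 (ℓ - 1 - d) (by omega) (by omega)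
      have e1 : (⟨0 + n, by omega⟩ : Fin (n+1)) = Fin.last n := by ext; simp
      have e0 : (⟨0, by omega⟩ : Fin (n+1)) = 0 := rfl
      rw [e1, hcyc, e0] at h1
      have e3 : (⟨ℓ - 1 - d + n, by omega⟩ : Fin ℓ) = (⟨ℓ - 1 - (d - n), by omega⟩ : Fin ℓ) := by
        ext; simp; omega
      rw [e3] at h1
      have h2 := ih (d - n) (by omega) (by omega)
      rw [h1, h2]
      have e5 : (⟨n - 1 - (d - n) % n, by omega⟩ : Fin n) = ⟨n - 1 - d % n, by omega⟩ := by
        simp only [Fin.mk.injEq]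
        rw [Nat.mod_eq_sub_mod hdn]
      rw [e5]

/-- **Lemma.** In a WBG, if two cycles of the same positive length, based at vertices
`u^(i)` and `v^(j)` respectively, have equal label sequences, then `u = v` as words
in `Σ^ℓ`. -/
theorem wbg_cycles_same_label_same_word {A : Type} {ℓ T : ℕ} (hℓ : 1 ≤ ℓ)
    (G : WBG A ℓ T) {n : ℕ} (hn : 0 < n) (C C' : G.Path n) (u v : G.Vertex)
    (hC0 : C.vtx 0 = u) (hC1 : C.vtx (Fin.last n) = u)
    (hC'0 : C'.vtx 0 = v) (hC'1 : C'.vtx (Fin.last n) = v)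
    (hlbl : C.lbl = C'.lbl) :
    u.1.2 = v.1.2 := by
  funext k
  set d := ℓ - 1 - (k : ℕ) with hdv
  have hk : (k : ℕ) < ℓ := k.2
  have hkd : k = (⟨ℓ - 1 - d, by omega⟩ : Fin ℓ) := by ext; simp [hdv]; omega
  have e1 := wbg_cycle_word hℓ G hn C (hC1.trans hC0.symm) d (by omega)
  have e2 := wbg_cycle_word hℓ G hn C' (hC'1.trans hC'0.symm) d (by omega)
  rw [hC0] at e1
  rw [hC'0] at e2
  rw [hkd, e1, e2, hlbl]
end

section
/- Fix T ≥ 1 and a set of representatives Ω_T. For z = z_0 z_1 ⋯ z_{T−1} ∈ Ω_T and an integer 0 ≤ q ≤ L_z − 1, define J(z, q) = { (q − i) mod T : 0 ≤ i ≤ T−1, z_i = 1 }. Then the map (z, q) ↦ J(z, q) is a bijection from the set of pairs { (z, q) : z ∈ Ω_T, 0 ≤ q ≤ L_z − 1 } onto the set of nonempty subsets of {0, 1, …, T−1}. -/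
open scoped BigOperators

section JsetHelpers
variable {T : ℕ}

lemma zAt_congr' (z : Fin T → Bool) {a b : ℕ} (h : a % T = b % T) : zAt z a = zAt z b := by
  simp only [zAt, h]

lemma zAt_eq' (hT : 0 < T) (z : Fin T → Bool) (n : ℕ) :
    zAt z n = z ⟨n % T, Nat.mod_lt _ hT⟩ := by
  simp only [zAt, dif_pos (Nat.mod_lt _ hT)]

lemma zAt_period_T' (hT : 0 < T) (z : Fin T → Bool) (m : ℕ) : zAt z (m + T) = zAt z m :=
  zAt_congr' z (Nat.add_mod_right m T)

lemma zAt_add_period' (z : Fin T → Bool) {d : ℕ} (hp : ∀ m, zAt z (m + d) = zAt z m) :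
    ∀ k m, zAt z (m + d * k) = zAt z m := by
  intro k
  induction k with
  | zero => simp
  | succ k ih =>
    intro m
    have h1 : m + d * (k + 1) = (m + d * k) + d := by ring
    rw [h1, hp, ih]

lemma zAt_period_gcd' (z : Fin T → Bool) :
    ∀ d e, (∀ m, zAt z (m + d) = zAt z m) → (∀ m, zAt z (m + e) = zAt z m) →
      ∀ m, zAt z (m + Nat.gcd d e) = zAt z m := by
  intro d
  induction d using Nat.strong_induction_on with
  | _ d ih =>
    intro e hd he m
    rcases Nat.eq_zero_or_pos d with h0 | h0
    · subst h0; simpa using he m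
    · have hrec : ∀ m, zAt z (m + e % d) = zAt z m := by
        intro m
        have h1 : m + e = (m + e % d) + d * (e / d) := by
          have := Nat.mod_add_div e d; omega
        have h2 := zAt_add_period' z hd (e / d) (m + e % d)
        rw [← h1] at h2
        rw [← h2, he]
      have h3 := ih (e % d) (Nat.mod_lt e h0) d hrec hd m
      rwa [Nat.gcd_rec d e]

lemma primLen_spec' (hT : 0 < T) (z : Fin T → Bool) :
    0 < primLen z ∧ primLen z ∣ T ∧ ∀ m, zAt z (m + primLen z) = zAt z m := by
  have hTmem : T ∈ {L : ℕ | 0 < L ∧ L ∣ T ∧ ∀ m : ℕ, zAt z (m + L) = zAt z m} :=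
    ⟨hT, dvd_refl T, fun m => zAt_period_T' hT z m⟩
  exact Nat.sInf_mem ⟨T, hTmem⟩

lemma primLen_le' (hT : 0 < T) (z : Fin T → Bool) {d : ℕ} (hd : 0 < d)
    (hp : ∀ m, zAt z (m + d) = zAt z m) : primLen z ≤ d := by
  have hg : ∀ m, zAt z (m + Nat.gcd d T) = zAt z m :=
    zAt_period_gcd' z d T hp (zAt_period_T' hT z)
  have hmem : Nat.gcd d T ∈ {L : ℕ | 0 < L ∧ L ∣ T ∧ ∀ m : ℕ, zAt z (m + L) = zAt z m} :=
    ⟨Nat.gcd_pos_of_pos_left T hd, Nat.gcd_dvd_right d T, hg⟩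
  exact le_trans (Nat.sInf_le hmem) (Nat.le_of_dvd hd (Nat.gcd_dvd_left d T))

lemma zAt_congr_period' (z : Fin T → Bool) {L : ℕ} (hp : ∀ m, zAt z (m + L) = zAt z m)
    {a b : ℕ} (hab : a % L = b % L) : zAt z a = zAt z b := by
  rcases Nat.eq_zero_or_pos L with h0 | h0
  · subst h0; simp at hab; rw [hab]
  · wlog h : a ≤ b generalizing a b
    · exact (this hab.symm (le_of_not_ge h)).symm
    · have hdvd : L ∣ b - a := (Nat.modEq_iff_dvd' h).mp hab
      obtain ⟨k, hk⟩ := hdvd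
      have hb : b = a + L * k := by omega
      rw [hb, zAt_add_period' z hp]

lemma mod_cancel' (hT : 0 < T) (q j : ℕ) (hj : j < T) :
    (q + T - ((q + T - j) % T)) % T = j := by
  have h1 : (q + T - j) % T + T * ((q + T - j) / T) = q + T - j := Nat.mod_add_div _ _
  have h2 : (q + T - j) % T < T := Nat.mod_lt _ hT
  have h3 : q + T - ((q + T - j) % T) = j + T * ((q + T - j) / T) := by omega
  rw [h3, Nat.add_mul_mod_self_left, Nat.mod_eq_of_lt hj]

lemma mem_Jset_iff' (hT : 0 < T) (z : Fin T → Bool) (q : ℕ) (j : Fin T) :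
    j ∈ Jset z q ↔ zAt z (q + T - (j : ℕ)) = true := by
  constructor
  · rintro ⟨i, hi, hji⟩
    have hmod : (q + T - (j : ℕ)) % T = (i : ℕ) := by
      rw [hji, mod_cancel' hT q (i : ℕ) i.isLt]
    rw [zAt_eq' hT]
    have hfe : (⟨(q + T - (j : ℕ)) % T, Nat.mod_lt _ hT⟩ : Fin T) = i := Fin.ext hmod
    rw [hfe]; exact hi
  · intro h
    refine ⟨⟨(q + T - (j : ℕ)) % T, Nat.mod_lt _ hT⟩, ?_, ?_⟩
    · rw [zAt_eq' hT] at h; exact h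
    · exact (mod_cancel' hT q (j : ℕ) j.isLt).symm

lemma mod_shift' (hT : 0 < T) (n m : ℕ) :
    (n + T - ((T - m % T) % T)) % T = (n + m) % T := by
  have h1 : m % T < T := Nat.mod_lt _ hT
  have h2 : m % T + T * (m / T) = m := Nat.mod_add_div _ _
  rcases Nat.eq_zero_or_pos (m % T) with h0 | h0
  · have hj : (T - m % T) % T = 0 := by rw [h0, Nat.sub_zero, Nat.mod_self]
    rw [hj, Nat.sub_zero]
    have e : n + m = n + T * (m / T) := by omega
    rw [e, Nat.add_mul_mod_self_left, Nat.add_mod_right]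
  · have hj : (T - m % T) % T = T - m % T := Nat.mod_eq_of_lt (by omega)
    rw [hj]
    have e : n + T - (T - m % T) = n + m % T := by omega
    rw [e]
    conv_rhs => rw [← h2]
    rw [← Nat.add_assoc, Nat.add_mul_mod_self_left]

lemma shift_of_Jeq' (hT : 0 < T) {z z' : Fin T → Bool} {q q' : ℕ}
    (h : Jset z q = Jset z' q') : ∀ m, zAt z (q + m) = zAt z' (q' + m) := by
  intro m
  have hj : (T - m % T) % T < T := Nat.mod_lt _ hT
  have hmem := Set.ext_iff.mp h ⟨(T - m % T) % T, hj⟩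
  rw [mem_Jset_iff' hT, mem_Jset_iff' hT] at hmem
  have e1 : zAt z (q + T - ((T - m % T) % T)) = zAt z (q + m) := zAt_congr' z (mod_shift' hT q m)
  have e2 : zAt z' (q' + T - ((T - m % T) % T)) = zAt z' (q' + m) :=
    zAt_congr' z' (mod_shift' hT q' m)
  rw [e1, e2] at hmem
  cases hb : zAt z (q + m) <;> cases hb' : zAt z' (q' + m) <;> simp_all

end JsetHelpers

/-- **Lemma.** The map `(z, q) ↦ J(z,q) = {(q - i) mod T : z_i = 1}` is a bijection from
the pairs `{(z,q) : z ∈ Ω_T, 0 ≤ q ≤ L_z - 1}` onto the nonempty subsets of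
`{0, 1, …, T-1}`. -/

theorem Jset_bijOn {T : ℕ} (hT : 1 ≤ T) (Ω : Finset (Fin T → Bool)) (hΩ : IsRepSet Ω) :
    Set.BijOn (fun p : (Fin T → Bool) × ℕ => Jset p.1 p.2)
      {p : (Fin T → Bool) × ℕ | p.1 ∈ Ω ∧ p.2 < primLen p.1}
      {J : Set (Fin T) | J.Nonempty} := by
  have hT0 : 0 < T := hT
  classical
  refine ⟨?_, ?_, ?_⟩
  · -- MapsTo
    rintro ⟨z, q⟩ ⟨hz, hq⟩
    have h0 : z ⟨0, hT0⟩ = true := by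
      have h1 := hΩ.1 z hz
      rw [zAt_eq' hT0] at h1
      have hfe : (⟨0 % T, Nat.mod_lt _ hT0⟩ : Fin T) = ⟨0, hT0⟩ := Fin.ext (Nat.zero_mod T)
      rwa [hfe] at h1
    refine ⟨⟨q % T, Nat.mod_lt _ hT0⟩, ⟨0, hT0⟩, h0, ?_⟩
    show q % T = (q + T - 0) % T
    rw [Nat.sub_zero, Nat.add_mod_right]
  · -- InjOn
    rintro ⟨z, q⟩ ⟨hz, hq⟩ ⟨z', q'⟩ ⟨hz', hq'⟩ heq
    simp only at heq
    have hshift := shift_of_Jeq' hT0 heq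
    have hone : ∃ i, z i = true := by
      have h1 := hΩ.1 z hz
      rw [zAt_eq' hT0] at h1
      exact ⟨_, h1⟩
    have hz'eq : z' = z := by
      refine (hΩ.2 z hone).unique ⟨hz', ?_⟩ ⟨hz, ⟨0, fun m => by rw [Nat.add_zero]⟩⟩
      refine ⟨q + q' * (T - 1), fun m => ?_⟩
      have e1 : zAt z' m = zAt z' (q' + (m + q' * (T - 1))) := by
        apply zAt_congr'
        have hTT : q' + (m + q' * (T - 1)) = m + q' * T := by
          have h1 : T = 1 + (T - 1) := by omega
          calc q' + (m + q' * (T - 1)) = m + q' * (1 + (T - 1)) := by ring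
            _ = m + q' * T := by rw [← h1]
        rw [hTT, Nat.add_mul_mod_self_right]
      rw [e1, ← hshift, show q + (m + q' * (T - 1)) = m + (q + q' * (T - 1)) from by ring]
    subst hz'eq
    obtain ⟨hLpos, hLdvd, hLper⟩ := primLen_spec' hT0 z'
    have key : ∀ a b : ℕ, a ≤ b → b < primLen z' →
        (∀ m, zAt z' (a + m) = zAt z' (b + m)) → a = b := by
      intro a b hab hbL hsh
      by_contra hne
      have hd : 0 < b - a := by omega
      have hper : ∀ n, zAt z' (n + (b - a)) = zAt z' n := by
        intro n
        have haT : a ≤ a * T := Nat.le_mul_of_pos_right a hT0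
        have e1 : a + (n + (b - a) + a * T - b) = n + a * T := by omega
        have e2 : b + (n + (b - a) + a * T - b) = n + (b - a) + a * T := by omega
        calc zAt z' (n + (b - a)) = zAt z' (n + (b - a) + a * T) :=
              (zAt_congr' z' (Nat.add_mul_mod_self_right _ _ _)).symm
          _ = zAt z' (b + (n + (b - a) + a * T - b)) := by rw [e2]
          _ = zAt z' (a + (n + (b - a) + a * T - b)) := (hsh _).symm
          _ = zAt z' (n + a * T) := by rw [e1]
          _ = zAt z' n := zAt_congr' z' (Nat.add_mul_mod_self_right _ _ _)
      have := primLen_le' hT0 z' hd hper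
      omega
    have hqq : q = q' := by
      rcases le_total q q' with hle | hle
      · exact key q q' hle hq' hshift
      · exact (key q' q hle hq (fun m => (hshift m).symm)).symm
    rw [hqq]
  · -- SurjOn
    rintro J hJ
    obtain ⟨j₀, hj₀⟩ := hJ
    set y : Fin T → Bool :=
      fun i => decide ((⟨(T - (i : ℕ)) % T, Nat.mod_lt _ hT0⟩ : Fin T) ∈ J) with hy
    have hyAt : ∀ n : ℕ,
        zAt y n = decide ((⟨(T - n % T) % T, Nat.mod_lt _ hT0⟩ : Fin T) ∈ J) := by
      intro n
      rw [zAt_eq' hT0]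
    have hcanc : ∀ j : Fin T, (T - ((T - (j : ℕ)) % T)) % T = (j : ℕ) := by
      intro j
      have h1 := mod_cancel' hT0 0 (j : ℕ) j.isLt
      simpa using h1
    have hone : ∃ i, y i = true := by
      refine ⟨⟨(T - (j₀ : ℕ)) % T, Nat.mod_lt _ hT0⟩, ?_⟩
      show decide ((⟨(T - ((T - (j₀ : ℕ)) % T)) % T, Nat.mod_lt _ hT0⟩ : Fin T) ∈ J) = true
      rw [decide_eq_true_iff]
      have hfe : (⟨(T - ((T - (j₀ : ℕ)) % T)) % T, Nat.mod_lt _ hT0⟩ : Fin T) = j₀ :=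
        Fin.ext (hcanc j₀)
      rw [hfe]; exact hj₀
    obtain ⟨zz, ⟨hzΩ, q0, hq0⟩, _⟩ := hΩ.2 y hone
    obtain ⟨hLpos, hLdvd, hLper⟩ := primLen_spec' hT0 zz
    have hqqT : ((T - q0 % T) % T + q0) % T = 0 := by
      have h1 : q0 % T < T := Nat.mod_lt _ hT0
      have h2 : q0 % T + T * (q0 / T) = q0 := Nat.mod_add_div _ _
      rcases Nat.eq_zero_or_pos (q0 % T) with h0 | h0
      · have hz0 : (T - q0 % T) % T = 0 := by rw [h0, Nat.sub_zero, Nat.mod_self]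
        rw [hz0, Nat.zero_add]; exact h0
      · have hz0 : (T - q0 % T) % T = T - q0 % T := Nat.mod_eq_of_lt (by omega)
        have e : (T - q0 % T) % T + q0 = T * (1 + q0 / T) := by
          rw [hz0, Nat.mul_add, Nat.mul_one]; omega
        rw [e, Nat.mul_mod_right]
    set qq := (T - q0 % T) % T with hqqdef
    set q := qq % primLen zz with hqdef
    have hqlt : q < primLen zz := Nat.mod_lt _ hLpos
    have hJeq : Jset zz q = J := by
      have step1 : Jset zz q = Jset zz qq := by
        ext j
        rw [mem_Jset_iff' hT0, mem_Jset_iff' hT0]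
        have hcong : zAt zz (q + T - (j : ℕ)) = zAt zz (qq + T - (j : ℕ)) := by
          apply zAt_congr_period' zz hLper
          have hjT := j.isLt
          have e1 : q + T - (j : ℕ) = q + (T - (j : ℕ)) := by omega
          have e2 : qq + T - (j : ℕ) = qq + (T - (j : ℕ)) := by omega
          rw [e1, e2, hqdef, Nat.mod_add_mod]
        rw [hcong]
      have step2 : Jset zz qq = J := by
        ext j
        rw [mem_Jset_iff' hT0, hq0 (qq + T - (j : ℕ)), hyAt]
        rw [decide_eq_true_iff]
        have hjT := j.isLt
        have hmodT : (qq + T - (j : ℕ) + q0) % T = (T - (j : ℕ)) % T := by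
          have e : qq + T - (j : ℕ) + q0 = (qq + q0) + (T - (j : ℕ)) := by omega
          rw [e, Nat.add_mod, hqqT, Nat.zero_add, Nat.mod_mod_of_dvd _ dvd_rfl]
        have hidx : (T - ((qq + T - (j : ℕ) + q0) % T)) % T = (j : ℕ) := by
          rw [hmodT]; exact hcanc j
        have hfe : (⟨(T - ((qq + T - (j : ℕ) + q0) % T)) % T, Nat.mod_lt _ hT0⟩ : Fin T) = j :=
          Fin.ext hidx
        rw [hfe]
      rw [step1, step2]
    exact ⟨(zz, q), ⟨hzΩ, hqlt⟩, hJeq⟩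
end

section
/- Let W ≥ 1 and s ≥ 1 be integers, and define β(W, s) = Σ_{r | s} μ(r) · (−1)^{(s/r)·W − 1}, where the sum is over the positive divisors r of s and μ is the Möbius function. Then β(W, s) = (−1)^{W−1} if s = 1; β(W, s) = −1 − (−1)^{W−1} if s = 2; and β(W, s) = 0 if s ≥ 3. (In the paper this is applied with W = W_z, the number of 1's in the primitive root of a binary word z ∈ Ω_T, and with s ranging over the divisors of N_z.) -/
open scoped BigOperators

open ArithmeticFunction ArithmeticFunction.Moebius in
/-- **Lemma (Möbius sums).** For integers `W ≥ 1`, `s ≥ 1`, with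
`β(W,s) = Σ_{r ∣ s} μ(r) (-1)^{(s/r)W - 1}`: `β(W,1) = (-1)^{W-1}`,
`β(W,2) = -1 - (-1)^{W-1}`, and `β(W,s) = 0` for `s ≥ 3`. -/
theorem moebius_beta_sum (W s : ℕ) (hW : 1 ≤ W) (hs : 1 ≤ s) :
    (∑ r ∈ s.divisors, (μ r : ℤ) * (-1 : ℤ) ^ (s / r * W - 1)) =
      if s = 1 then (-1 : ℤ) ^ (W - 1)
      else if s = 2 then -1 - (-1 : ℤ) ^ (W - 1)
      else 0 := by
  have neg_pow : ∀ a b : ℕ, a % 2 = b % 2 → (-1 : ℤ) ^ a = (-1 : ℤ) ^ b := by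
    intro a b h
    rw [← Nat.div_add_mod a 2, ← Nat.div_add_mod b 2, h, pow_add, pow_add,
      pow_mul, pow_mul, neg_one_sq, one_pow, one_pow]
  set A : ℤ := (-1 : ℤ) ^ (W - 1) with hA
  set f : ℕ → ℤ := fun n => if n = 1 then A else if n = 2 then -1 - A else 0 with hf
  set g : ℕ → ℤ := fun n => (-1 : ℤ) ^ (n * W - 1) with hg
  have key : ∀ n > 0, ∑ i ∈ n.divisors, f i = g n := by
    intro n hn
    have h1 : (∑ i ∈ n.divisors, if i = 1 then A else 0) = A := by
      rw [Finset.sum_ite_eq' n.divisors 1 (fun _ => A)]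
      simp [Nat.one_mem_divisors, hn.ne']
    have h2 : (∑ i ∈ n.divisors, if i = 2 then (-1 - A) else 0)
        = if 2 ∣ n then -1 - A else 0 := by
      rw [Finset.sum_ite_eq' n.divisors 2 (fun _ => -1 - A)]
      simp [Nat.mem_divisors, hn.ne']
    have hsplit : ∑ i ∈ n.divisors, f i
        = (∑ i ∈ n.divisors, if i = 1 then A else 0)
          + (∑ i ∈ n.divisors, if i = 2 then (-1 - A) else 0) := by
      rw [← Finset.sum_add_distrib]
      apply Finset.sum_congr rfl
      intro i _
      simp only [hf]
      by_cases h1 : i = 1 <;> by_cases h2 : i = 2 <;> simp [h1, h2]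
    rw [hsplit, h1, h2, hg]
    rcases Nat.even_or_odd n with he | ho
    · have h2n : 2 ∣ n := he.two_dvd
      have : (n * W - 1) % 2 = 1 := by
        obtain ⟨k, hk⟩ := h2n
        have h' : n * W = 2 * (k * W) := by rw [hk]; ring
        have : n * W ≥ 1 := Nat.one_le_iff_ne_zero.mpr (by positivity)
        omega
      simp only [if_pos h2n]
      rw [neg_pow (n * W - 1) 1 (by omega)]
      ring
    · have h2n : ¬ 2 ∣ n := by simpa [Nat.odd_iff, Nat.two_dvd_ne_zero] using ho
      simp only [if_neg h2n, add_zero, hA]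
      refine (neg_pow _ _ ?_).symm
      obtain ⟨k, hk⟩ := ho
      have hW1 : W ≥ 1 := hW
      have : n * W = 2 * (k * W) + W := by rw [hk]; ring
      omega
  have := (ArithmeticFunction.sum_eq_iff_sum_smul_moebius_eq (f := f) (g := g)).mp key s hs
  rw [Nat.sum_divisorsAntidiagonal (f := fun x y => (μ x : ℤ) • g y)] at this
  simp only [smul_eq_mul, hg] at this
  rw [this]
end

section
/- Let Σ be a nonempty finite alphabet, T ≥ 1, and let F̂ = (F̂^(0), …, F̂^(T−1)) be an ordered list of finite sets of nonempty words over Σ defining the PFT X = X_{F̂,T}. Then there exist an integer ℓ ≥ 1 and a set F⁰ ⊆ Σ^ℓ such that X = X_{F,T} with F = (F⁰, ∅, …, ∅); that is, every PFT admits a representation in standard form in which all forbidden words lie in the 0-th forbidden set and have a common length ℓ. -/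
open scoped BigOperators

/-- **Proposition (standard form).** Every PFT `X_{F̂,T}`, defined by an ordered list
`F̂ = (F̂^(0), …, F̂^(T-1))` of finite sets of nonempty forbidden words, admits a
representation in standard form: there are `ℓ ≥ 1` and `F⁰ ⊆ Σ^ℓ` with
`X_{F̂,T} = X(F⁰, ℓ, T)`. -/
theorem pft_standard_form {A : Type} [Fintype A] [Nonempty A] (T : ℕ) (hT : 1 ≤ T)
    (Fh : ℕ → Set (List A)) (hfin : ∀ j, (Fh j).Finite)
    (hne : ∀ j, ∀ f ∈ Fh j, f ≠ []) :
    ∃ ℓ : ℕ, 1 ≤ ℓ ∧ ∃ F0 : Set (Word A ℓ), pftGen T Fh = pftSF F0 T := by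
  classical
  set M : ℕ := (Finset.range T).sup (fun j => ((hfin j).toFinset).sup List.length) with hM
  have hlen : ∀ j < T, ∀ f ∈ Fh j, f.length ≤ M := by
    intro j hj f hf
    calc f.length ≤ ((hfin j).toFinset).sup List.length :=
          Finset.le_sup ((hfin j).mem_toFinset.2 hf)
      _ ≤ M := Finset.le_sup (f := fun j => ((hfin j).toFinset).sup List.length) (Finset.mem_range.2 hj)
  refine ⟨T + M, by omega, ?_⟩
  refine ⟨{w : Word A (T + M) | ∃ o : ℕ, o < T ∧ ∃ f ∈ Fh o, ∃ _hle : o + f.length ≤ T + M,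
    ∀ k (hk : k < f.length), f.get ⟨k, hk⟩ = w ⟨o + k, by omega⟩}, ?_⟩
  ext x
  simp only [pftGen, pftSF, Set.mem_setOf_eq]
  constructor
  · rintro ⟨r, hr, hx⟩
    refine ⟨r, hr, ?_⟩
    intro i hi hmem
    obtain ⟨o, ho, f, hf, hle, hmatch⟩ := hmem
    have h1 : ((i + o) % (T : ℤ)) = (o : ℤ) := by
      obtain ⟨c, rfl⟩ := hi
      rw [add_comm, Int.add_mul_emod_self_left]
      exact Int.emod_eq_of_lt (by exact_mod_cast Nat.zero_le o) (by exact_mod_cast ho)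
    refine hx (i + o) f ?_ ?_
    · rw [h1]
      simpa using hf
    · intro k hk
      have h2 := hmatch k hk
      rw [h2]
      congr 1
      push_cast
      ring
  · rintro ⟨r, hr, hx⟩
    refine ⟨r, hr, ?_⟩
    intro i f hf hmatch
    set j : ℕ := (i % (T : ℤ)).toNat with hj
    have hT0 : (0 : ℤ) < T := by exact_mod_cast hT
    have hj1 : (0 : ℤ) ≤ i % T := Int.emod_nonneg i (by omega)
    have hj2 : i % (T : ℤ) < T := Int.emod_lt_of_pos i hT0
    have hjT : j < T := by omega
    have hjcast : (j : ℤ) = i % T := by omega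
    have hdvd : (T : ℤ) ∣ (i - j) := by
      refine ⟨i / T, ?_⟩
      rw [hjcast, Int.emod_def]
      ring
    refine hx (i - (j : ℤ)) hdvd ⟨j, hjT, f, hf, ?_, ?_⟩
    · have := hlen j hjT f hf
      omega
    · intro k hk
      rw [hmatch k hk]
      congr 1
      push_cast
      ring
end
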